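/- arXiv:1706.00953 — 4 statements merged into one kernel-verified Lean document; each statement's English description precedes it below -/
import Mathlib

section
/- Assume Hypothesis (H). If the symbols ξ_k are independent and identically distributed, i.e. p_k = p for all k for some fixed probability measure p on the positive integers, then the probability measure μ_ξ is singular with respect to Lebesgue measure: μ_ξ ⊥ λ. -/
open MeasureTheory Set

namespace ROE

/-- The `x`-sequence of the restricted Oppenheim algorithm applied to `x`:
index `k` corresponds to the paper's `x_{k+1}`, and `a k`, `b k` correspond to the paper's
`a_{k+1}`, `b_{k+1}`.  So `X a b x 0 = x₁ = x` and
`x_{k+2} = (b_{k+1}(d_{k+1})/a_{k+1}(d_{k+1})) · (x_{k+1} - 1/d_{k+1})`. -/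
noncomputable def X (a b : ℕ → ℕ → ℕ) (x : ℝ) : ℕ → ℝ
  | 0 => x
  | k + 1 =>
      let xk := X a b x k
      let d : ℕ := (⌊1 / xk⌋).toNat + 1
      ((b k d : ℝ) / (a k d : ℝ)) * (xk - 1 / (d : ℝ))

/-- The digit `d_{k+1}(x) = ⌊1/x_{k+1}⌋ + 1` of the restricted Oppenheim expansion. -/
noncomputable def D (a b : ℕ → ℕ → ℕ) (x : ℝ) (k : ℕ) : ℕ :=
  (⌊1 / X a b x k⌋).toNat + 1

/-- The restricted Oppenheim expansion of `x` is infinite: all `x_n` lie in `(0,1)`. -/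
def InfiniteROE (a b : ℕ → ℕ → ℕ) (x : ℝ) : Prop :=
  ∀ k, X a b x k ∈ Set.Ioo (0 : ℝ) 1

/-- The finite sequence `(j 0, …, j (n-1))` (the paper's `(j_1, …, j_n)`) is admissible:
`j_1 ≥ 2` and `j_{i+1} > h_i(j_i)`.  Here `h i` corresponds to the paper's `h_{i+1}`. -/
def Admissible (h : ℕ → ℕ → ℕ) (n : ℕ) (j : ℕ → ℕ) : Prop :=
  2 ≤ j 0 ∧ ∀ i, i + 1 < n → h i (j i) < j (i + 1)

/-- The cylinder of rank `n` with base `(j 0, …, j (n-1))`: the set of `x ∈ (0,1)` with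
infinite ROE whose first `n` digits are `j 0, …, j (n-1)`. -/
def cylinder (a b : ℕ → ℕ → ℕ) (n : ℕ) (j : ℕ → ℕ) : Set ℝ :=
  {x | x ∈ Set.Ioo (0 : ℝ) 1 ∧ InfiniteROE a b x ∧ ∀ i < n, D a b x i = j i}

/-- The difference-ROE digit `α_{k+1}(x)`: `α₁ = d₁ - 1`, `α_{k+2} = d_{k+2} - h_{k+1}(d_{k+1})`. -/
noncomputable def alpha (a b h : ℕ → ℕ → ℕ) (x : ℝ) : ℕ → ℕ
  | 0 => D a b x 0 - 1
  | k + 1 => D a b x (k + 1) - h k (D a b x k)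

/-- The digit sequence `d` reconstructed from a sequence `α` of difference-ROE symbols:
`d₁ = α₁ + 1`, `d_{k+2} = h_{k+1}(d_{k+1}) + α_{k+2}`. -/
def dSeq (h : ℕ → ℕ → ℕ) (α : ℕ → ℕ) : ℕ → ℕ
  | 0 => α 0 + 1
  | k + 1 => h k (dSeq h α k) + α (k + 1)

/-- The real number whose difference-ROE digits are `(α k)`:
`Φ(α) = Σ_{n≥1} (∏_{i=1}^{n-1} a_i(d_i)/b_i(d_i)) · (1/d_n)`. -/
noncomputable def Phi (a b h : ℕ → ℕ → ℕ) (α : ℕ → ℕ) : ℝ :=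
  ∑' n : ℕ, (∏ i ∈ Finset.range n, (a i (dSeq h α i) : ℝ) / (b i (dSeq h α i) : ℝ)) *
    (1 / (dSeq h α n : ℝ))


open Filter

section Aux

variable {a b h : ℕ → ℕ → ℕ}

/-- The digit of `t`. -/
noncomputable def dd (t : ℝ) : ℕ := (⌊1 / t⌋).toNat + 1

lemma D_eq_dd (a b : ℕ → ℕ → ℕ) (x : ℝ) (k : ℕ) : D a b x k = dd (X a b x k) := rfl

/-- The one-step map. -/
noncomputable def Fm (a b : ℕ → ℕ → ℕ) (m : ℕ) (t : ℝ) : ℝ :=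
  ((b m (dd t) : ℝ) / (a m (dd t) : ℝ)) * (t - 1 / (dd t : ℝ))

lemma X_succ_Fm (a b : ℕ → ℕ → ℕ) (x : ℝ) (k : ℕ) :
    X a b x (k + 1) = Fm a b k (X a b x k) := rfl

lemma dd_spec {t : ℝ} (h0 : 0 < t) (h1 : t ≤ 1) :
    2 ≤ dd t ∧ 1 / (dd t : ℝ) < t ∧ t ≤ 1 / ((dd t : ℝ) - 1) := by
  have hinv : (1 : ℝ) ≤ 1 / t := by rw [le_div_iff₀ h0]; linarith
  have hfl : (1 : ℤ) ≤ ⌊1 / t⌋ := Int.le_floor.mpr (by exact_mod_cast hinv)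
  have hnn : (0 : ℤ) ≤ ⌊1 / t⌋ := by omega
  have hc : ((⌊1 / t⌋.toNat : ℕ) : ℝ) = ((⌊1 / t⌋ : ℤ) : ℝ) := by
    exact_mod_cast congrArg (fun z : ℤ => (z : ℝ)) (Int.toNat_of_nonneg hnn)
  have hdd2 : 2 ≤ dd t := by unfold dd; omega
  have hddc : (dd t : ℝ) = ((⌊1 / t⌋ : ℤ) : ℝ) + 1 := by
    unfold dd; push_cast [← hc]; ring
  have hddpos : (0 : ℝ) < (dd t : ℝ) := by positivity
  have hub : 1 / t < (dd t : ℝ) := by rw [hddc]; exact Int.lt_floor_add_one _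
  have hlb : (dd t : ℝ) - 1 ≤ 1 / t := by rw [hddc]; simpa using Int.floor_le (1 / t)
  refine ⟨hdd2, ?_, ?_⟩
  · rw [div_lt_iff₀ hddpos]
    have h2 := (div_lt_iff₀ h0).mp hub
    nlinarith
  · have hd1 : (0 : ℝ) < (dd t : ℝ) - 1 := by
      have : (2 : ℝ) ≤ (dd t : ℝ) := by exact_mod_cast hdd2
      linarith
    rw [le_div_iff₀ hd1]
    have h2 := (le_div_iff₀ h0).mp hlb
    nlinarith

lemma dd_eq {e : ℕ} (he : 2 ≤ e) {t : ℝ} (ht1 : 1 / (e : ℝ) < t)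
    (ht2 : t ≤ 1 / ((e : ℝ) - 1)) : dd t = e := by
  have heR : (2 : ℝ) ≤ (e : ℝ) := by exact_mod_cast he
  have he1 : (0 : ℝ) < (e : ℝ) - 1 := by linarith
  have hepos : (0 : ℝ) < (e : ℝ) := by linarith
  have h0 : 0 < t := lt_trans (by positivity) ht1
  have hfl : ⌊1 / t⌋ = (e : ℤ) - 1 := by
    rw [Int.floor_eq_iff]
    constructor
    · have h2 := (le_div_iff₀ h0).mpr (by nlinarith [(le_div_iff₀ he1).mp ht2] : ((e:ℝ) - 1) * t ≤ 1)
      push_cast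
      linarith [h2]
    · have h2 := (div_lt_iff₀ h0).mpr (by nlinarith [(div_lt_iff₀ hepos).mp ht1] : 1 < (e : ℝ) * t)
      push_cast
      linarith [h2]
  unfold dd; rw [hfl]; omega

section withHyp

variable (ha : ∀ k j, 2 ≤ j → 0 < a k j) (hb : ∀ k j, 2 ≤ j → 0 < b k j)
  (hpos : ∀ k j, 2 ≤ j → 0 < h k j)
  (hab : ∀ k j, 2 ≤ j → b k j * h k j = a k j * j * (j - 1))

include hab in
lemma hab_real {k e : ℕ} (he : 2 ≤ e) :
    (b k e : ℝ) * (h k e : ℝ) = (a k e : ℝ) * (e : ℝ) * ((e : ℝ) - 1) := by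
  have h1 : 1 ≤ e := by omega
  have := congrArg (fun n : ℕ => (n : ℝ)) (hab k e he)
  push_cast [Nat.cast_sub h1] at this
  linarith [this]

include ha hb hpos hab in
lemma key_div2 {k e : ℕ} (he : 2 ≤ e) :
    (b k e : ℝ) / (a k e : ℝ) * (1 / ((e : ℝ) * ((e : ℝ) - 1))) = 1 / (h k e : ℝ) := by
  have hA : (0 : ℝ) < a k e := by exact_mod_cast ha k e he
  have hB : (0 : ℝ) < b k e := by exact_mod_cast hb k e he
  have hHp : (0 : ℝ) < h k e := by exact_mod_cast hpos k e he
  have heR : (2 : ℝ) ≤ (e : ℝ) := by exact_mod_cast he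
  have hBH := hab_real (a := a) (b := b) (h := h) hab (k := k) he
  rw [div_mul_div_comm, div_eq_div_iff (by nlinarith) (by nlinarith)]
  nlinarith [hBH]

include ha hb hpos hab in
lemma key_div {k e : ℕ} (he : 2 ≤ e) :
    (a k e : ℝ) / (b k e : ℝ) * (1 / (h k e : ℝ)) = 1 / ((e : ℝ) * ((e : ℝ) - 1)) := by
  have hA : (0 : ℝ) < a k e := by exact_mod_cast ha k e he
  have hB : (0 : ℝ) < b k e := by exact_mod_cast hb k e he
  have hHp : (0 : ℝ) < h k e := by exact_mod_cast hpos k e he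
  have heR : (2 : ℝ) ≤ (e : ℝ) := by exact_mod_cast he
  have hBH := hab_real (a := a) (b := b) (h := h) hab (k := k) he
  rw [div_mul_div_comm, div_eq_div_iff (by nlinarith) (by nlinarith)]
  nlinarith [hBH]

include hab in
lemma key_div3 {k e : ℕ} (he : 2 ≤ e) (ha' : (0:ℝ) < a k e) (hb' : (0:ℝ) < b k e)
    (hh' : (0:ℝ) < h k e) :
    (b k e : ℝ) / ((a k e : ℝ) * (e : ℝ) * ((e : ℝ) - 1)) = 1 / (h k e : ℝ) := by
  have heR : (2 : ℝ) ≤ (e : ℝ) := by exact_mod_cast he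
  have hBH := hab_real (a := a) (b := b) (h := h) hab (k := k) he
  rw [div_eq_div_iff (by nlinarith : ((a k e : ℝ) * (e:ℝ) * ((e:ℝ)-1)) ≠ 0) hh'.ne']
  nlinarith [hBH]

include ha hb hpos hab in
lemma X_mem_Ioc {x : ℝ} (hx : x ∈ Ioc (0 : ℝ) 1) : ∀ n, X a b x n ∈ Ioc (0 : ℝ) 1 := by
  intro n
  induction n with
  | zero => exact hx
  | succ n ih =>
    obtain ⟨ht0, ht1⟩ := ih
    obtain ⟨h2d, hlt, hle⟩ := dd_spec ht0 ht1
    have hXs : X a b x (n + 1) = ((b n (dd (X a b x n)) : ℝ) / (a n (dd (X a b x n)) : ℝ)) *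
        (X a b x n - 1 / (dd (X a b x n) : ℝ)) := rfl
    set t := X a b x n with htdef
    set e := dd t with hedef
    have hA : (0 : ℝ) < a n e := by exact_mod_cast ha n e h2d
    have hB : (0 : ℝ) < b n e := by exact_mod_cast hb n e h2d
    have hHp : (0 : ℝ) < h n e := by exact_mod_cast hpos n e h2d
    have heR : (2 : ℝ) ≤ (e : ℝ) := by exact_mod_cast h2d
    constructor
    · rw [hXs]
      have : (0:ℝ) < t - 1 / (e:ℝ) := by linarith
      positivity
    · rw [hXs]
      have hdiff : t - 1 / (e : ℝ) ≤ 1 / ((e : ℝ) * ((e : ℝ) - 1)) := by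
        have hne1 : ((e:ℝ) - 1) ≠ 0 := by linarith
        have hne2 : (e:ℝ) ≠ 0 := by linarith
        have : (1:ℝ) / ((e:ℝ) - 1) - 1 / (e:ℝ) = 1 / ((e:ℝ) * ((e:ℝ) - 1)) := by
          field_simp
          ring
        linarith
      have h1 : ((b n e : ℝ) / (a n e : ℝ)) * (t - 1 / (e : ℝ))
          ≤ ((b n e : ℝ) / (a n e : ℝ)) * (1 / ((e : ℝ) * ((e : ℝ) - 1))) := by
        apply mul_le_mul_of_nonneg_left hdiff (by positivity)
      rw [key_div2 ha hb hpos hab h2d] at h1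
      have : (1:ℝ) / (h n e : ℝ) ≤ 1 := by
        rw [div_le_one hHp]
        exact_mod_cast hpos n e h2d
      linarith

include ha hb hpos hab in
lemma two_le_D {x : ℝ} (hx : x ∈ Ioc (0 : ℝ) 1) (k : ℕ) : 2 ≤ D a b x k := by
  obtain ⟨h0, h1⟩ := X_mem_Ioc ha hb hpos hab hx k
  exact (dd_spec h0 h1).1

end withHyp

lemma tele {c ε : ℝ} (hc : 1 ≤ c) (hε : 0 ≤ ε) :
    HasSum (fun k : ℕ => ε / ((c + k + 1) * (c + k))) (ε / c) := by
  have hck : ∀ k : ℕ, (0:ℝ) < c + k := fun k => by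
    have : (0:ℝ) ≤ (k:ℝ) := Nat.cast_nonneg k
    linarith
  have hterm : ∀ k : ℕ, ε / ((c + k + 1) * (c + k)) = ε / (c + k) - ε / (c + (k+1 : ℕ)) := by
    intro k
    have h1 := hck k
    have h2 : (0:ℝ) < c + k + 1 := by linarith
    have h1' : c + (k:ℝ) ≠ 0 := h1.ne'
    have h2' : c + ((k:ℕ)+1:ℕ) ≠ 0 := by push_cast; linarith
    push_cast
    rw [div_sub_div _ _ h1' (by push_cast at h2' ⊢; linarith)]
    rw [div_eq_div_iff (by nlinarith) (by nlinarith)]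
    ring
  rw [hasSum_iff_tendsto_nat_of_nonneg]
  · have hsum : ∀ n : ℕ, ∑ i ∈ Finset.range n, ε / ((c + i + 1) * (c + i))
        = ε / c - ε / (c + n) := by
      intro n
      have := Finset.sum_range_sub' (fun k : ℕ => ε / (c + k)) n
      simp only [hterm]
      simpa using this
    simp only [hsum]
    have h1 : Tendsto (fun n : ℕ => c + (n:ℝ)) atTop atTop :=
      tendsto_atTop_add_const_left _ c tendsto_natCast_atTop_atTop
    have h2 : Tendsto (fun n : ℕ => ε / (c + (n:ℝ))) atTop (nhds 0) := by
      simp only [div_eq_mul_inv]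
      simpa using (h1.inv_tendsto_atTop).const_mul ε
    simpa using tendsto_const_nhds.sub h2
  · intro i
    have h1 := hck i
    have h2 : (0:ℝ) < c + i + 1 := by linarith
    positivity

lemma volume_affine_preimage {r s : ℝ} (hr : 0 < r) (W : Set ℝ) :
    volume ((fun t => r * t + s) ⁻¹' W) = ENNReal.ofReal r⁻¹ * volume W := by
  have h1 : (fun t : ℝ => r * t + s) ⁻¹' W
      = (fun t : ℝ => r * t) ⁻¹' ((fun u : ℝ => u + s) ⁻¹' W) := rfl
  rw [h1, Real.volume_preimage_mul_left hr.ne', measure_preimage_add_right,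
    abs_of_pos (inv_pos.mpr hr)]

lemma cover {ε : ℝ} (hε : 0 ≤ ε) (H : ℕ) (hH : 1 ≤ H) (W : Set ℝ)
    (hWsub : W ⊆ Ioc 0 (1 / (H : ℝ)))
    (hWb : ∀ d : ℕ, 2 ≤ d →
      volume (W ∩ Ioc (1/(d:ℝ)) (1/((d:ℝ)-1))) ≤ ENNReal.ofReal (ε / ((d:ℝ)*((d:ℝ)-1)))) :
    volume W ≤ ENNReal.ofReal (ε / (H : ℝ)) := by
  have hHR : (1:ℝ) ≤ (H:ℝ) := by exact_mod_cast hH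
  have hHpos : (0:ℝ) < (H:ℝ) := by linarith
  have hcov : W ⊆ ⋃ k : ℕ, W ∩ Ioc (1/((H+1+k:ℕ):ℝ)) (1/(((H+1+k:ℕ):ℝ)-1)) := by
    intro t ht
    have h1 := hWsub ht
    have ht0 : 0 < t := h1.1
    have htle1 : t ≤ 1 := le_trans h1.2 (by rw [div_le_one hHpos]; exact hHR)
    obtain ⟨h2, hlt, hle⟩ := dd_spec ht0 htle1
    have hdH : H + 1 ≤ dd t := by
      have hHt : (H:ℝ) ≤ 1/t := by
        rw [le_div_iff₀ ht0]
        have := (le_div_iff₀ hHpos).mp h1.2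
        nlinarith
      have : (H:ℤ) ≤ ⌊1/t⌋ := Int.le_floor.mpr (by exact_mod_cast hHt)
      unfold dd; omega
    refine mem_iUnion.mpr ⟨dd t - (H+1), ?_⟩
    have hco : (H + 1 + (dd t - (H+1)) : ℕ) = dd t := by omega
    rw [hco]
    exact ⟨ht, hlt, hle⟩
  have hterm : ∀ k : ℕ, ε / (((H+1+k:ℕ):ℝ) * (((H+1+k:ℕ):ℝ)-1))
      = ε / (((H:ℝ) + k + 1) * ((H:ℝ) + k)) := by
    intro k; push_cast; ring_nf
  have htel := tele (c := (H:ℝ)) hHR hε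
  calc volume W ≤ volume (⋃ k : ℕ, W ∩ Ioc (1/((H+1+k:ℕ):ℝ)) (1/(((H+1+k:ℕ):ℝ)-1))) :=
        measure_mono hcov
    _ ≤ ∑' k : ℕ, volume (W ∩ Ioc (1/((H+1+k:ℕ):ℝ)) (1/(((H+1+k:ℕ):ℝ)-1))) :=
        measure_iUnion_le _
    _ ≤ ∑' k : ℕ, ENNReal.ofReal (ε / (((H+1+k:ℕ):ℝ) * (((H+1+k:ℕ):ℝ)-1))) :=
        ENNReal.tsum_le_tsum (fun k => hWb _ (by omega))
    _ = ENNReal.ofReal (ε / (H:ℝ)) := by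
        simp only [hterm]
        rw [← ENNReal.ofReal_tsum_of_nonneg (fun k => by
          have h1 : (0:ℝ) < (H:ℝ) + k := by positivity
          have h2 : (0:ℝ) < (H:ℝ) + k + 1 := by positivity
          positivity) htel.summable, htel.tsum_eq]

lemma measurable_dd : Measurable dd := by
  have h1 : Measurable fun t : ℝ => ⌊1/t⌋ := (measurable_const.div measurable_id).floor
  exact (measurable_of_countable fun z : ℤ => z.toNat + 1).comp h1

lemma measurable_Fm (a b : ℕ → ℕ → ℕ) (m : ℕ) : Measurable (Fm a b m) := by
  have hdd := measurable_dd
  have h1 : Measurable fun t : ℝ => ((b m (dd t) : ℝ)) :=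
    (measurable_of_countable fun e : ℕ => ((b m e : ℕ) : ℝ)).comp hdd
  have h2 : Measurable fun t : ℝ => ((a m (dd t) : ℝ)) :=
    (measurable_of_countable fun e : ℕ => ((a m e : ℕ) : ℝ)).comp hdd
  have h3 : Measurable fun t : ℝ => (1 / (dd t : ℝ)) :=
    (measurable_of_countable fun e : ℕ => (1 / (e : ℝ))).comp hdd
  exact (h1.div h2).mul (measurable_id.sub h3)

lemma measurable_X (a b : ℕ → ℕ → ℕ) : ∀ n, Measurable fun x : ℝ => X a b x n := by
  intro n
  induction n with
  | zero => exact measurable_id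
  | succ n ih => exact (measurable_Fm a b n).comp ih

lemma measurable_D (a b : ℕ → ℕ → ℕ) (k : ℕ) : Measurable fun x : ℝ => D a b x k :=
  measurable_dd.comp (measurable_X a b k)

lemma measurable_alpha (a b h : ℕ → ℕ → ℕ) (k : ℕ) :
    Measurable fun x : ℝ => alpha a b h x k := by
  cases k with
  | zero => exact (measurable_of_countable fun m : ℕ => m - 1).comp (measurable_D a b 0)
  | succ k =>
    exact (measurable_of_countable fun pr : ℕ × ℕ => pr.1 - h k pr.2).comp
      ((measurable_D a b (k+1)).prodMk (measurable_D a b k))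

end Aux


section Main

variable {a b h : ℕ → ℕ → ℕ}

lemma lemM (ha : ∀ k j, 2 ≤ j → 0 < a k j) (hb : ∀ k j, 2 ≤ j → 0 < b k j)
    (hpos : ∀ k j, 2 ≤ j → 0 < h k j)
    (hab : ∀ k j, 2 ≤ j → b k j * h k j = a k j * j * (j - 1))
    {ε : ℝ} (hε : 0 ≤ ε) :
    ∀ (m : ℕ) (S : Set ℝ), MeasurableSet S → S ⊆ Ioc 0 1 →
      (∀ d : ℕ, 2 ≤ d → volume (S ∩ Ioc (1/(d:ℝ)) (1/((d:ℝ)-1)))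
        ≤ ENNReal.ofReal (ε / ((d:ℝ)*((d:ℝ)-1)))) →
      volume {x | x ∈ Ioc (0:ℝ) 1 ∧ X a b x m ∈ S} ≤ ENNReal.ofReal ε := by
  intro m
  induction m with
  | zero =>
    intro S hSm hsub hbd
    have hset : {x | x ∈ Ioc (0:ℝ) 1 ∧ X a b x 0 ∈ S} = S := by
      ext x
      constructor
      · rintro ⟨_, hx⟩; exact hx
      · intro hx; exact ⟨hsub hx, hx⟩
    rw [hset]
    have := cover hε 1 le_rfl S (by simpa using hsub) hbd
    simpa using this
  | succ m ih =>
    intro S hSm hsub hbd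
    set S' : Set ℝ := (Fm a b m) ⁻¹' S ∩ Ioc 0 1 with hS'def
    have hset : {x | x ∈ Ioc (0:ℝ) 1 ∧ X a b x (m+1) ∈ S}
        = {x | x ∈ Ioc (0:ℝ) 1 ∧ X a b x m ∈ S'} := by
      ext x
      simp only [mem_setOf_eq, hS'def, mem_inter_iff, mem_preimage]
      constructor
      · rintro ⟨hx, hX⟩
        exact ⟨hx, by rw [← X_succ_Fm]; exact hX, X_mem_Ioc ha hb hpos hab hx m⟩
      · rintro ⟨hx, hX, _⟩
        exact ⟨hx, by rw [X_succ_Fm]; exact hX⟩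
    rw [hset]
    refine ih S' ((hSm.preimage (measurable_Fm a b m)).inter measurableSet_Ioc)
      inter_subset_right ?_
    intro e he
    have heR : (2:ℝ) ≤ (e:ℝ) := by exact_mod_cast he
    have hepos : (0:ℝ) < (e:ℝ) := by linarith
    have he1 : (0:ℝ) < (e:ℝ) - 1 := by linarith
    have hA : (0:ℝ) < a m e := by exact_mod_cast ha m e he
    have hB : (0:ℝ) < b m e := by exact_mod_cast hb m e he
    have hHp : (0:ℝ) < h m e := by exact_mod_cast hpos m e he
    have hH1 : 1 ≤ h m e := hpos m e he
    set r : ℝ := (b m e : ℝ) / (a m e : ℝ) with hrdef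
    have hrpos : 0 < r := by positivity
    -- the affine form of Fm on the interval
    have hFm_eq : ∀ t ∈ Ioc (1/(e:ℝ)) (1/((e:ℝ)-1)), Fm a b m t = r * t + (-(r / (e:ℝ))) := by
      intro t ht
      have hddt : dd t = e := dd_eq he ht.1 ht.2
      unfold Fm
      rw [hddt]
      ring
    -- the image lands in (0, 1/h]
    have hmap : ∀ t ∈ Ioc (1/(e:ℝ)) (1/((e:ℝ)-1)),
        Fm a b m t ∈ Ioc 0 (1 / (h m e : ℝ)) := by
      intro t ht
      have hddt : dd t = e := dd_eq he ht.1 ht.2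
      have hF : Fm a b m t = r * (t - 1/(e:ℝ)) := by
        unfold Fm; rw [hddt]
      constructor
      · rw [hF]
        have : (0:ℝ) < t - 1/(e:ℝ) := by have := ht.1; linarith
        positivity
      · rw [hF]
        have hne1 : ((e:ℝ) - 1) ≠ 0 := by linarith
        have hne2 : (e:ℝ) ≠ 0 := by linarith
        have hid : (1:ℝ) / ((e:ℝ) - 1) - 1 / (e:ℝ) = 1 / ((e:ℝ) * ((e:ℝ) - 1)) := by
          field_simp; ring
        have hdiff : t - 1/(e:ℝ) ≤ 1 / ((e:ℝ) * ((e:ℝ)-1)) := by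
          have := ht.2; linarith
        have h1 : r * (t - 1/(e:ℝ)) ≤ r * (1 / ((e:ℝ) * ((e:ℝ)-1))) :=
          mul_le_mul_of_nonneg_left hdiff hrpos.le
        rw [hrdef] at h1
        rw [key_div2 ha hb hpos hab he] at h1
        exact h1
    -- subset of an affine preimage
    set W : Set ℝ := S ∩ Ioc 0 (1 / (h m e : ℝ)) with hWdef
    have hsub2 : S' ∩ Ioc (1/(e:ℝ)) (1/((e:ℝ)-1))
        ⊆ (fun t => r * t + (-(r / (e:ℝ)))) ⁻¹' W := by
      rintro t ⟨⟨htS, _⟩, htI⟩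
      refine mem_preimage.mpr ⟨?_, ?_⟩
      · rw [← hFm_eq t htI]; exact htS
      · rw [← hFm_eq t htI]; exact hmap t htI
    have hWvol : volume W ≤ ENNReal.ofReal (ε / (h m e : ℝ)) := by
      refine cover hε (h m e) hH1 W inter_subset_right ?_
      intro d hd
      refine le_trans (measure_mono ?_) (hbd d hd)
      exact inter_subset_inter_left _ inter_subset_left
    calc volume (S' ∩ Ioc (1/(e:ℝ)) (1/((e:ℝ)-1)))
        ≤ volume ((fun t => r * t + (-(r / (e:ℝ)))) ⁻¹' W) := measure_mono hsub2
      _ = ENNReal.ofReal r⁻¹ * volume W := volume_affine_preimage hrpos W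
      _ ≤ ENNReal.ofReal r⁻¹ * ENNReal.ofReal (ε / (h m e : ℝ)) := by
          exact mul_le_mul_right hWvol _
      _ = ENNReal.ofReal (r⁻¹ * (ε / (h m e : ℝ))) := by
          rw [ENNReal.ofReal_mul (by positivity)]
      _ ≤ ENNReal.ofReal (ε / ((e:ℝ) * ((e:ℝ)-1))) := by
          apply ENNReal.ofReal_le_ofReal
          apply le_of_eq
          have hkey := key_div ha hb hpos hab (k := m) he
          have hr' : r⁻¹ = (a m e : ℝ) / (b m e : ℝ) := by
            rw [hrdef, inv_div]
          rw [hr']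
          linear_combination ε * hkey

lemma event_bound (ha : ∀ k j, 2 ≤ j → 0 < a k j) (hb : ∀ k j, 2 ≤ j → 0 < b k j)
    (hpos : ∀ k j, 2 ≤ j → 0 < h k j)
    (hab : ∀ k j, 2 ≤ j → b k j * h k j = a k j * j * (j - 1))
    {l : ℕ → ℝ} (hlpos : ∀ k, 2 ≤ k → 0 < l k)
    (hH : ∀ x : ℝ, InfiniteROE a b x → ∀ m : ℕ,
      (b m (D a b x m) : ℝ) /
          ((a m (D a b x m) : ℝ) * (D a b x m : ℝ) * ((D a b x m : ℝ) - 1)) < l (m + 2))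
    (K m : ℕ) :
    volume {x | x ∈ Ioc (0:ℝ) 1 ∧ InfiniteROE a b x ∧ alpha a b h x (m+1) ≤ K}
      ≤ ENNReal.ofReal ((K:ℝ) * l (m+2)) := by
  have hl2 : 0 < l (m+2) := hlpos _ (by omega)
  have hε : 0 ≤ (K:ℝ) * l (m+2) := by positivity
  set S : Set ℝ := ⋃ (e : ℕ), ⋃ (_ : 2 ≤ e ∧ 1/((h m e : ℕ):ℝ) < l (m+2)),
      (Ioc (1/(e:ℝ)) (1/((e:ℝ)-1)) ∩
        Fm a b m ⁻¹' (Ioc (1/((h m e : ℝ) + (K:ℝ))) (1/(h m e : ℝ)))) with hSdef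
  have hSm : MeasurableSet S := by
    apply MeasurableSet.iUnion; intro e; apply MeasurableSet.iUnion; intro _
    exact measurableSet_Ioc.inter ((measurable_Fm a b m) measurableSet_Ioc)
  have hSsub : S ⊆ Ioc 0 1 := by
    intro t ht
    simp only [hSdef, mem_iUnion] at ht
    obtain ⟨e, ⟨he2, -⟩, htI, -⟩ := ht
    have heR : (2:ℝ) ≤ (e:ℝ) := by exact_mod_cast he2
    constructor
    · have h0 : (0:ℝ) < 1/(e:ℝ) := by positivity
      exact lt_trans h0 htI.1
    · have h1 : 1/((e:ℝ)-1) ≤ 1 := by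
        rw [div_le_one (by linarith)]; linarith
      exact le_trans htI.2 h1
  have hbd : ∀ d : ℕ, 2 ≤ d → volume (S ∩ Ioc (1/(d:ℝ)) (1/((d:ℝ)-1)))
      ≤ ENNReal.ofReal ((K:ℝ) * l (m+2) / ((d:ℝ)*((d:ℝ)-1))) := by
    intro d hd
    have hdR : (2:ℝ) ≤ (d:ℝ) := by exact_mod_cast hd
    have hd1 : (0:ℝ) < (d:ℝ) - 1 := by linarith
    have hdpos : (0:ℝ) < (d:ℝ) := by linarith
    by_cases hgood : 1/((h m d : ℕ):ℝ) < l (m+2)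
    · have hA : (0:ℝ) < a m d := by exact_mod_cast ha m d hd
      have hB : (0:ℝ) < b m d := by exact_mod_cast hb m d hd
      have hHm1 : (1:ℝ) ≤ (h m d : ℝ) := by exact_mod_cast hpos m d hd
      have hHmpos : (0:ℝ) < (h m d : ℝ) := by linarith
      have hK0 : (0:ℝ) ≤ (K:ℝ) := Nat.cast_nonneg K
      set r : ℝ := (b m d : ℝ) / (a m d : ℝ) with hrdef
      have hrpos : 0 < r := by positivity
      have hsub2 : S ∩ Ioc (1/(d:ℝ)) (1/((d:ℝ)-1)) ⊆
          (fun t => r * t + (-(r/(d:ℝ)))) ⁻¹'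
            (Ioc (1/((h m d : ℝ) + (K:ℝ))) (1/(h m d : ℝ))) := by
        rintro t ⟨htS, htI⟩
        simp only [hSdef, mem_iUnion] at htS
        obtain ⟨e, ⟨he2, hge⟩, htIe, htF⟩ := htS
        have hed : e = d := by
          have h1 := dd_eq he2 htIe.1 htIe.2
          have h2 := dd_eq hd htI.1 htI.2
          omega
        subst hed
        have hFt : Fm a b m t = r * t + -(r/(e:ℝ)) := by
          unfold Fm; rw [dd_eq hd htI.1 htI.2, hrdef]; ring
        rw [mem_preimage, ← hFt]
        exact htF
      have hgood' : 1 < l (m+2) * (h m d : ℝ) := by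
        have := (div_lt_iff₀ hHmpos).mp hgood
        linarith
      have hineq : 1/(h m d:ℝ) - 1/((h m d:ℝ)+(K:ℝ))
          ≤ (K:ℝ) * l (m+2) * (1/(h m d:ℝ)) := by
        have hne1 : (h m d:ℝ) ≠ 0 := hHmpos.ne'
        have hne2 : (h m d:ℝ) + (K:ℝ) ≠ 0 := by positivity
        have h1 : 1/(h m d:ℝ) - 1/((h m d:ℝ)+(K:ℝ))
            = (K:ℝ)/((h m d:ℝ)*((h m d:ℝ)+(K:ℝ))) := by
          field_simp
          ring
        have h3 : (0:ℝ) ≤ l (m+2)*(h m d:ℝ) + l (m+2)*(K:ℝ) - 1 := by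
          nlinarith [mul_nonneg hl2.le hK0]
        rw [h1, mul_one_div, div_le_div_iff₀ (by positivity) hHmpos]
        nlinarith [mul_nonneg (mul_nonneg hK0 hHmpos.le) h3]
      have e1 : r⁻¹ * (1/(h m d:ℝ)) = 1/((d:ℝ)*((d:ℝ)-1)) := by
        rw [hrdef, inv_div]
        exact key_div ha hb hpos hab hd
      calc volume (S ∩ Ioc (1/(d:ℝ)) (1/((d:ℝ)-1)))
          ≤ volume ((fun t => r * t + (-(r/(d:ℝ)))) ⁻¹'
              (Ioc (1/((h m d : ℝ) + (K:ℝ))) (1/(h m d : ℝ)))) := measure_mono hsub2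
        _ = ENNReal.ofReal r⁻¹ *
              volume (Ioc (1/((h m d : ℝ) + (K:ℝ))) (1/(h m d : ℝ))) :=
            volume_affine_preimage hrpos _
        _ = ENNReal.ofReal r⁻¹ *
              ENNReal.ofReal (1/(h m d : ℝ) - 1/((h m d : ℝ) + (K:ℝ))) := by
            rw [Real.volume_Ioc]
        _ = ENNReal.ofReal (r⁻¹ * (1/(h m d : ℝ) - 1/((h m d : ℝ) + (K:ℝ)))) := by
            rw [ENNReal.ofReal_mul (by positivity)]
        _ ≤ ENNReal.ofReal ((K:ℝ) * l (m+2) / ((d:ℝ)*((d:ℝ)-1))) := by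
            apply ENNReal.ofReal_le_ofReal
            calc r⁻¹ * (1/(h m d : ℝ) - 1/((h m d : ℝ) + (K:ℝ)))
                ≤ r⁻¹ * ((K:ℝ) * l (m+2) * (1/(h m d:ℝ))) :=
                  mul_le_mul_of_nonneg_left hineq (by positivity)
              _ = (K:ℝ) * l (m+2) * (r⁻¹ * (1/(h m d:ℝ))) := by ring
              _ = (K:ℝ) * l (m+2) * (1/((d:ℝ)*((d:ℝ)-1))) := by rw [e1]
              _ = (K:ℝ) * l (m+2) / ((d:ℝ)*((d:ℝ)-1)) := by ring
    · have hempty : S ∩ Ioc (1/(d:ℝ)) (1/((d:ℝ)-1)) = ∅ := by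
        ext t
        simp only [mem_inter_iff, mem_empty_iff_false, iff_false, not_and]
        intro htS htI
        simp only [hSdef, mem_iUnion] at htS
        obtain ⟨e, ⟨he2, hge⟩, htIe, -⟩ := htS
        have hed : e = d := by
          have h1 := dd_eq he2 htIe.1 htIe.2
          have h2 := dd_eq hd htI.1 htI.2
          omega
        exact hgood (hed ▸ hge)
      rw [hempty]
      simp
  have hincl : {x | x ∈ Ioc (0:ℝ) 1 ∧ InfiniteROE a b x ∧ alpha a b h x (m+1) ≤ K}
      ⊆ {x | x ∈ Ioc (0:ℝ) 1 ∧ X a b x m ∈ S} := by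
    rintro x ⟨hx, hInf, hαK⟩
    have hXm := hInf m
    have hXm1 := hInf (m+1)
    obtain ⟨he2, hlt, hle⟩ := dd_spec hXm.1 hXm.2.le
    have he2 : 2 ≤ D a b x m := he2
    have hlt : 1 / (D a b x m : ℝ) < X a b x m := hlt
    have hle : X a b x m ≤ 1 / ((D a b x m : ℝ) - 1) := hle
    have hA : (0:ℝ) < a m (D a b x m) := by exact_mod_cast ha _ _ he2
    have hB : (0:ℝ) < b m (D a b x m) := by exact_mod_cast hb _ _ he2
    have hHp : (0:ℝ) < h m (D a b x m) := by exact_mod_cast hpos _ _ he2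
    have hgood : 1/((h m (D a b x m)):ℝ) < l (m+2) := by
      have h1 := hH x hInf m
      rwa [key_div3 hab he2 hA hB hHp] at h1
    refine ⟨hx, ?_⟩
    rw [hSdef]
    refine mem_iUnion.mpr ⟨D a b x m, mem_iUnion.mpr ⟨⟨he2, hgood⟩, ⟨⟨hlt, hle⟩, ?_⟩⟩⟩
    rw [mem_preimage, ← X_succ_Fm]
    constructor
    · have hD1 : D a b x (m+1) ≤ h m (D a b x m) + K := by
        have halpha : alpha a b h x (m+1) = D a b x (m+1) - h m (D a b x m) := rfl
        omega
      obtain ⟨hf2, hflt, hfle⟩ := dd_spec hXm1.1 hXm1.2.le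
      have hDpos : (0:ℝ) < (D a b x (m+1) : ℝ) := by
        have : (2:ℝ) ≤ (D a b x (m+1) : ℝ) := by exact_mod_cast hf2
        linarith
      have h2 : 1/((h m (D a b x m):ℝ) + (K:ℝ)) ≤ 1/((D a b x (m+1)):ℝ) := by
        apply one_div_le_one_div_of_le hDpos
        exact_mod_cast hD1
      exact lt_of_le_of_lt h2 hflt
    · have heR : (2:ℝ) ≤ (D a b x m : ℝ) := by exact_mod_cast he2
      have hXs : X a b x (m+1) = ((b m (D a b x m) : ℝ) / (a m (D a b x m) : ℝ)) *
          (X a b x m - 1 / (D a b x m : ℝ)) := rfl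
      rw [hXs]
      have hne1 : ((D a b x m : ℝ) - 1) ≠ 0 := by linarith
      have hne2 : (D a b x m : ℝ) ≠ 0 := by linarith
      have hid : (1:ℝ) / ((D a b x m : ℝ) - 1) - 1 / (D a b x m : ℝ)
          = 1 / ((D a b x m : ℝ) * ((D a b x m : ℝ) - 1)) := by
        field_simp; ring
      have hdiff : X a b x m - 1/(D a b x m : ℝ)
          ≤ 1 / ((D a b x m : ℝ) * ((D a b x m : ℝ) - 1)) := by linarith
      have h1 : ((b m (D a b x m) : ℝ) / (a m (D a b x m) : ℝ)) *
          (X a b x m - 1 / (D a b x m : ℝ))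
          ≤ ((b m (D a b x m) : ℝ) / (a m (D a b x m) : ℝ)) *
            (1 / ((D a b x m : ℝ) * ((D a b x m : ℝ) - 1))) :=
        mul_le_mul_of_nonneg_left hdiff (by positivity)
      rwa [key_div2 ha hb hpos hab he2] at h1
  calc volume {x | x ∈ Ioc (0:ℝ) 1 ∧ InfiniteROE a b x ∧ alpha a b h x (m+1) ≤ K}
      ≤ volume {x | x ∈ Ioc (0:ℝ) 1 ∧ X a b x m ∈ S} := measure_mono hincl
    _ ≤ ENNReal.ofReal ((K:ℝ) * l (m+2)) := lemM ha hb hpos hab hε m S hSm hSsub hbd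

lemma null2 (ha : ∀ k j, 2 ≤ j → 0 < a k j) (hb : ∀ k j, 2 ≤ j → 0 < b k j)
    (hpos : ∀ k j, 2 ≤ j → 0 < h k j)
    (hab : ∀ k j, 2 ≤ j → b k j * h k j = a k j * j * (j - 1))
    {l : ℕ → ℝ} (hlpos : ∀ k, 2 ≤ k → 0 < l k)
    (hlsum : Summable fun m : ℕ => l (m + 2))
    (hH : ∀ x : ℝ, InfiniteROE a b x → ∀ m : ℕ,
      (b m (D a b x m) : ℝ) /
          ((a m (D a b x m) : ℝ) * (D a b x m : ℝ) * ((D a b x m : ℝ) - 1)) < l (m + 2)) :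
    volume {x | x ∈ Ioc (0:ℝ) 1 ∧ InfiniteROE a b x ∧
      ¬ Tendsto (fun n => alpha a b h x n) atTop atTop} = 0 := by
  set A : ℕ → ℕ → Set ℝ := fun K m =>
    {x | x ∈ Ioc (0:ℝ) 1 ∧ InfiniteROE a b x ∧ alpha a b h x (m+1) ≤ K} with hAdef
  have hAbound : ∀ K m, volume (A K m) ≤ ENNReal.ofReal ((K:ℝ) * l (m+2)) :=
    fun K m => event_bound ha hb hpos hab hlpos hH K m
  have hBadK : ∀ K : ℕ, volume (⋂ N : ℕ, ⋃ m : ℕ, ⋃ (_ : N ≤ m), A K m) = 0 := by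
    intro K
    set G : ℕ → ENNReal := fun m => ENNReal.ofReal ((K:ℝ) * l (m+2)) with hGdef
    have hGsum : ∑' m, G m ≠ ⊤ := by
      rw [hGdef, ← ENNReal.ofReal_tsum_of_nonneg
        (fun m => mul_nonneg (Nat.cast_nonneg K) (hlpos (m+2) (by omega)).le)
        (hlsum.mul_left (K:ℝ))]
      exact ENNReal.ofReal_ne_top
    have htail := ENNReal.tendsto_sum_nat_add G hGsum
    have hle : ∀ N : ℕ, volume (⋂ N' : ℕ, ⋃ m : ℕ, ⋃ (_ : N' ≤ m), A K m)
        ≤ ∑' i, G (i + N) := by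
      intro N
      have hsub : (⋂ N' : ℕ, ⋃ m : ℕ, ⋃ (_ : N' ≤ m), A K m) ⊆ ⋃ i : ℕ, A K (i + N) := by
        intro x hx
        have := mem_iInter.mp hx N
        obtain ⟨mm, hm⟩ := mem_iUnion.mp this
        obtain ⟨hNm, hxm⟩ := mem_iUnion.mp hm
        refine mem_iUnion.mpr ⟨mm - N, ?_⟩
        have : mm - N + N = mm := by omega
        rw [this]
        exact hxm
      calc volume (⋂ N' : ℕ, ⋃ m : ℕ, ⋃ (_ : N' ≤ m), A K m)
          ≤ volume (⋃ i : ℕ, A K (i + N)) := measure_mono hsub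
        _ ≤ ∑' i, volume (A K (i + N)) := measure_iUnion_le _
        _ ≤ ∑' i, G (i + N) := ENNReal.tsum_le_tsum (fun i => hAbound K (i + N))
    have hzero : volume (⋂ N' : ℕ, ⋃ m : ℕ, ⋃ (_ : N' ≤ m), A K m) ≤ 0 :=
      ge_of_tendsto htail (Filter.Eventually.of_forall hle)
    exact le_antisymm hzero zero_le
  have hsub : {x | x ∈ Ioc (0:ℝ) 1 ∧ InfiniteROE a b x ∧
      ¬ Tendsto (fun n => alpha a b h x n) atTop atTop}
      ⊆ ⋃ K : ℕ, ⋂ N : ℕ, ⋃ m : ℕ, ⋃ (_ : N ≤ m), A K m := by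
    rintro x ⟨hx, hInf, hnt⟩
    rw [tendsto_atTop_atTop] at hnt
    push_neg at hnt
    obtain ⟨K, hK⟩ := hnt
    refine mem_iUnion.mpr ⟨K, mem_iInter.mpr fun N => ?_⟩
    obtain ⟨mm, hm1, hm2⟩ := hK (N + 1)
    refine mem_iUnion.mpr ⟨mm - 1, mem_iUnion.mpr ⟨by omega, ⟨hx, hInf, ?_⟩⟩⟩
    have hmm : mm - 1 + 1 = mm := by omega
    rw [hmm]
    omega
  refine measure_mono_null hsub ?_
  rw [measure_iUnion_null_iff]
  exact hBadK

lemma X_sub_eq (ha : ∀ k j, 2 ≤ j → 0 < a k j) (hb : ∀ k j, 2 ≤ j → 0 < b k j)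
    {x y : ℝ} :
    ∀ n, (∀ i, i < n → D a b x i = D a b y i) →
      X a b x n - X a b y n
        = (∏ i ∈ Finset.range n, (b i (D a b x i) : ℝ) / (a i (D a b x i) : ℝ))
            * (x - y) := by
  intro n
  induction n with
  | zero => simp [X]
  | succ n ih =>
    intro hdig
    have hd := hdig n (Nat.lt_succ_self n)
    have h1 : X a b x (n+1) = ((b n (D a b x n) : ℝ) / (a n (D a b x n) : ℝ)) *
        (X a b x n - 1 / (D a b x n : ℝ)) := rfl
    have h2 : X a b y (n+1) = ((b n (D a b y n) : ℝ) / (a n (D a b y n) : ℝ)) *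
        (X a b y n - 1 / (D a b y n : ℝ)) := rfl
    rw [h1, h2, ← hd, Finset.prod_range_succ]
    have h3 := ih (fun i hi => hdig i (Nat.lt_succ_of_lt hi))
    have : X a b y n = X a b x n - (∏ i ∈ Finset.range n,
        (b i (D a b x i) : ℝ) / (a i (D a b x i) : ℝ)) * (x - y) := by linarith
    rw [this]
    ring

lemma notInf_null (ha : ∀ k j, 2 ≤ j → 0 < a k j) (hb : ∀ k j, 2 ≤ j → 0 < b k j)
    (hpos : ∀ k j, 2 ≤ j → 0 < h k j)
    (hab : ∀ k j, 2 ≤ j → b k j * h k j = a k j * j * (j - 1)) :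
    volume {x | x ∈ Ioc (0:ℝ) 1 ∧ ¬ InfiniteROE a b x} = 0 := by
  have hsub : {x | x ∈ Ioc (0:ℝ) 1 ∧ ¬ InfiniteROE a b x}
      ⊆ ⋃ (n : ℕ), ⋃ (j : Fin n → ℕ),
        {x | x ∈ Ioc (0:ℝ) 1 ∧ X a b x n = 1 ∧ ∀ i : Fin n, D a b x (i : ℕ) = j i} := by
    rintro x ⟨hx, hnI⟩
    rw [InfiniteROE] at hnI
    push_neg at hnI
    obtain ⟨k, hk⟩ := hnI
    have hmem := X_mem_Ioc ha hb hpos hab hx k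
    have hXk : X a b x k = 1 := by
      rcases lt_or_eq_of_le hmem.2 with hlt | heq
      · exact absurd ⟨hmem.1, hlt⟩ hk
      · exact heq
    exact mem_iUnion.mpr ⟨k, mem_iUnion.mpr ⟨fun i => D a b x (i : ℕ), hx, hXk, fun i => rfl⟩⟩
  refine measure_mono_null hsub (Set.Countable.measure_zero ?_ _)
  refine Set.countable_iUnion (fun n => Set.countable_iUnion (fun j => ?_))
  apply Set.Subsingleton.countable
  rintro x ⟨hx, hXx, hDx⟩ y ⟨hy, hXy, hDy⟩
  have hdig : ∀ i, i < n → D a b x i = D a b y i := by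
    intro i hi
    rw [hDx ⟨i, hi⟩, hDy ⟨i, hi⟩]
  have h1 := X_sub_eq ha hb (x := x) (y := y) n hdig
  rw [hXx, hXy, sub_self] at h1
  have hprod : (0:ℝ) < ∏ i ∈ Finset.range n, (b i (D a b x i) : ℝ) / (a i (D a b x i) : ℝ) := by
    apply Finset.prod_pos
    intro i hi
    have h2d : 2 ≤ D a b x i := two_le_D ha hb hpos hab hx i
    have hA : (0:ℝ) < a i (D a b x i) := by exact_mod_cast ha _ _ h2d
    have hB : (0:ℝ) < b i (D a b x i) := by exact_mod_cast hb _ _ h2d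
    positivity
  rcases mul_eq_zero.mp h1.symm with hc | hc
  · exact absurd hc hprod.ne'
  · exact sub_eq_zero.mp hc

section Correspond

variable {α : ℕ → ℕ}

/-- Shifted tail terms of the series `Φ`. -/
noncomputable def termT (a b h : ℕ → ℕ → ℕ) (α : ℕ → ℕ) (n m : ℕ) : ℝ :=
  (∏ i ∈ Finset.range m, (a (n+i) (dSeq h α (n+i)) : ℝ) / (b (n+i) (dSeq h α (n+i)) : ℝ))
    * (1 / (dSeq h α (n+m) : ℝ))

lemma dSeq_two_le (hpos : ∀ k j, 2 ≤ j → 0 < h k j) (hα : ∀ k, 1 ≤ α k) :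
    ∀ n, 2 ≤ dSeq h α n := by
  intro n
  induction n with
  | zero => have := hα 0; simp [dSeq]; omega
  | succ n ih =>
    have h1 := hpos n (dSeq h α n) ih
    have h2 := hα (n+1)
    simp only [dSeq]
    omega

lemma termT_nonneg (n m : ℕ) : 0 ≤ termT a b h α n m := by
  unfold termT
  apply mul_nonneg
  · apply Finset.prod_nonneg
    intro i _
    positivity
  · positivity

lemma termT_succ (n m : ℕ) :
    termT a b h α n (m+1) = ((a n (dSeq h α n) : ℝ) / (b n (dSeq h α n) : ℝ))
      * termT a b h α (n+1) m := by
  unfold termT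
  rw [Finset.prod_range_succ']
  have h1 : ∀ i : ℕ, n + (i+1) = (n+1) + i := fun i => by omega
  have h2 : n + (m+1) = (n+1) + m := by omega
  rw [Finset.prod_congr rfl (fun i _ => by rw [h1 i]), h2]
  simp only [Nat.add_zero]
  ring

lemma partial_le (ha : ∀ k j, 2 ≤ j → 0 < a k j) (hb : ∀ k j, 2 ≤ j → 0 < b k j)
    (hpos : ∀ k j, 2 ≤ j → 0 < h k j)
    (hab : ∀ k j, 2 ≤ j → b k j * h k j = a k j * j * (j - 1))
    (hα : ∀ k, 1 ≤ α k) :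
    ∀ N n, ∑ m ∈ Finset.range N, termT a b h α n m ≤ 1 / ((dSeq h α n : ℝ) - 1) := by
  intro N
  induction N with
  | zero =>
    intro n
    have h2 : 2 ≤ dSeq h α n := dSeq_two_le hpos hα n
    have : (2:ℝ) ≤ (dSeq h α n : ℝ) := by exact_mod_cast h2
    simp only [Finset.range_zero, Finset.sum_empty]
    have hgt : (0:ℝ) < (dSeq h α n : ℝ) - 1 := by linarith
    positivity
  | succ N ih =>
    intro n
    have h2 : 2 ≤ dSeq h α n := dSeq_two_le hpos hα n
    have h2' : 2 ≤ dSeq h α (n+1) := dSeq_two_le hpos hα (n+1)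
    have hdR : (2:ℝ) ≤ (dSeq h α n : ℝ) := by exact_mod_cast h2
    have hA : (0:ℝ) < a n (dSeq h α n) := by exact_mod_cast ha _ _ h2
    have hB : (0:ℝ) < b n (dSeq h α n) := by exact_mod_cast hb _ _ h2
    have hHp : (0:ℝ) < h n (dSeq h α n) := by exact_mod_cast hpos _ _ h2
    rw [Finset.sum_range_succ']
    have hfirst : termT a b h α n 0 = 1 / (dSeq h α n : ℝ) := by
      unfold termT; simp
    have hsum : ∑ i ∈ Finset.range N, termT a b h α n (i+1)
        = ((a n (dSeq h α n) : ℝ) / (b n (dSeq h α n) : ℝ))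
          * ∑ i ∈ Finset.range N, termT a b h α (n+1) i := by
      rw [Finset.mul_sum]
      exact Finset.sum_congr rfl (fun i _ => termT_succ n i)
    rw [hfirst, hsum]
    have hd1 : (h n (dSeq h α n) : ℝ) ≤ (dSeq h α (n+1) : ℝ) - 1 := by
      have : dSeq h α (n+1) = h n (dSeq h α n) + α (n+1) := rfl
      have h3 := hα (n+1)
      have : h n (dSeq h α n) + 1 ≤ dSeq h α (n+1) := by omega
      have h4 : ((h n (dSeq h α n) + 1 : ℕ) : ℝ) ≤ (dSeq h α (n+1) : ℝ) := by
        exact_mod_cast this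
      push_cast at h4
      linarith
    have hd1pos : (0:ℝ) < (dSeq h α (n+1) : ℝ) - 1 := by
      have : (2:ℝ) ≤ (dSeq h α (n+1) : ℝ) := by exact_mod_cast h2'
      linarith
    have hih := ih (n+1)
    have hmono : (1:ℝ) / ((dSeq h α (n+1) : ℝ) - 1) ≤ 1 / (h n (dSeq h α n) : ℝ) :=
      one_div_le_one_div_of_le hHp hd1
    have hkey := key_div ha hb hpos hab (k := n) h2
    have hstep : ((a n (dSeq h α n) : ℝ) / (b n (dSeq h α n) : ℝ))
        * ∑ i ∈ Finset.range N, termT a b h α (n+1) i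
        ≤ 1 / ((dSeq h α n : ℝ) * ((dSeq h α n : ℝ) - 1)) := by
      calc ((a n (dSeq h α n) : ℝ) / (b n (dSeq h α n) : ℝ))
          * ∑ i ∈ Finset.range N, termT a b h α (n+1) i
          ≤ ((a n (dSeq h α n) : ℝ) / (b n (dSeq h α n) : ℝ))
            * (1 / (h n (dSeq h α n) : ℝ)) := by
            apply mul_le_mul_of_nonneg_left (le_trans hih hmono) (by positivity)
        _ = 1 / ((dSeq h α n : ℝ) * ((dSeq h α n : ℝ) - 1)) := hkey
    have hid : (1:ℝ) / (dSeq h α n : ℝ) + 1 / ((dSeq h α n : ℝ) * ((dSeq h α n : ℝ) - 1))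
        = 1 / ((dSeq h α n : ℝ) - 1) := by
      have hne1 : ((dSeq h α n : ℝ) - 1) ≠ 0 := by linarith
      have hne2 : (dSeq h α n : ℝ) ≠ 0 := by linarith
      field_simp
      ring
    linarith

lemma summable_termT (ha : ∀ k j, 2 ≤ j → 0 < a k j) (hb : ∀ k j, 2 ≤ j → 0 < b k j)
    (hpos : ∀ k j, 2 ≤ j → 0 < h k j)
    (hab : ∀ k j, 2 ≤ j → b k j * h k j = a k j * j * (j - 1))
    (hα : ∀ k, 1 ≤ α k) (n : ℕ) : Summable (termT a b h α n) :=
  summable_of_sum_range_le (fun m => termT_nonneg n m) (fun N => partial_le ha hb hpos hab hα N n)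

/-- The tail sums. -/
noncomputable def tailT (a b h : ℕ → ℕ → ℕ) (α : ℕ → ℕ) (n : ℕ) : ℝ :=
  ∑' m, termT a b h α n m

lemma tailT_le (ha : ∀ k j, 2 ≤ j → 0 < a k j) (hb : ∀ k j, 2 ≤ j → 0 < b k j)
    (hpos : ∀ k j, 2 ≤ j → 0 < h k j)
    (hab : ∀ k j, 2 ≤ j → b k j * h k j = a k j * j * (j - 1))
    (hα : ∀ k, 1 ≤ α k) (n : ℕ) :
    tailT a b h α n ≤ 1 / ((dSeq h α n : ℝ) - 1) :=
  Real.tsum_le_of_sum_range_le (fun m => termT_nonneg n m) (fun N => partial_le ha hb hpos hab hα N n)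

lemma tailT_succ (ha : ∀ k j, 2 ≤ j → 0 < a k j) (hb : ∀ k j, 2 ≤ j → 0 < b k j)
    (hpos : ∀ k j, 2 ≤ j → 0 < h k j)
    (hab : ∀ k j, 2 ≤ j → b k j * h k j = a k j * j * (j - 1))
    (hα : ∀ k, 1 ≤ α k) (n : ℕ) :
    tailT a b h α n = 1 / (dSeq h α n : ℝ)
      + ((a n (dSeq h α n) : ℝ) / (b n (dSeq h α n) : ℝ)) * tailT a b h α (n+1) := by
  unfold tailT
  rw [Summable.tsum_eq_zero_add (summable_termT ha hb hpos hab hα n)]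
  have h0 : termT a b h α n 0 = 1 / (dSeq h α n : ℝ) := by unfold termT; simp
  have h1 : ∑' m, termT a b h α n (m+1)
      = ((a n (dSeq h α n) : ℝ) / (b n (dSeq h α n) : ℝ)) * tailT a b h α (n+1) := by
    unfold tailT
    rw [← tsum_mul_left]
    exact tsum_congr (fun m => termT_succ n m)
  rw [h0, h1]
  rfl

lemma tailT_gt (ha : ∀ k j, 2 ≤ j → 0 < a k j) (hb : ∀ k j, 2 ≤ j → 0 < b k j)
    (hpos : ∀ k j, 2 ≤ j → 0 < h k j)
    (hab : ∀ k j, 2 ≤ j → b k j * h k j = a k j * j * (j - 1))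
    (hα : ∀ k, 1 ≤ α k) (n : ℕ) :
    1 / (dSeq h α n : ℝ) < tailT a b h α n := by
  have h2 : 2 ≤ dSeq h α n := dSeq_two_le hpos hα n
  have h2' : 2 ≤ dSeq h α (n+1) := dSeq_two_le hpos hα (n+1)
  have hA : (0:ℝ) < a n (dSeq h α n) := by exact_mod_cast ha _ _ h2
  have hB : (0:ℝ) < b n (dSeq h α n) := by exact_mod_cast hb _ _ h2
  have hd' : (0:ℝ) < (dSeq h α (n+1) : ℝ) := by
    have : (2:ℝ) ≤ (dSeq h α (n+1) : ℝ) := by exact_mod_cast h2'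
    linarith
  have hfirst : 1 / (dSeq h α (n+1) : ℝ) ≤ tailT a b h α (n+1) := by
    have hle := Summable.le_tsum (summable_termT ha hb hpos hab hα (n+1)) 0
      (fun j _ => termT_nonneg (n+1) j)
    have h0 : termT a b h α (n+1) 0 = 1 / (dSeq h α (n+1) : ℝ) := by
      unfold termT; simp
    rw [h0] at hle
    exact hle
  rw [tailT_succ ha hb hpos hab hα n]
  have : (0:ℝ) < ((a n (dSeq h α n) : ℝ) / (b n (dSeq h α n) : ℝ)) * tailT a b h α (n+1) := by
    apply mul_pos (by positivity)
    exact lt_of_lt_of_le (by positivity) hfirst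
  linarith

lemma Phi_eq_tailT : Phi a b h α = tailT a b h α 0 := by
  unfold Phi tailT termT
  exact tsum_congr (fun n => by simp)

lemma X_Phi (ha : ∀ k j, 2 ≤ j → 0 < a k j) (hb : ∀ k j, 2 ≤ j → 0 < b k j)
    (hpos : ∀ k j, 2 ≤ j → 0 < h k j)
    (hab : ∀ k j, 2 ≤ j → b k j * h k j = a k j * j * (j - 1))
    (hα : ∀ k, 1 ≤ α k) :
    ∀ n, X a b (Phi a b h α) n = tailT a b h α n := by
  intro n
  induction n with
  | zero => exact Phi_eq_tailT
  | succ n ih =>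
    have h2 : 2 ≤ dSeq h α n := dSeq_two_le hpos hα n
    have hdR : (2:ℝ) ≤ (dSeq h α n : ℝ) := by exact_mod_cast h2
    have hA : (0:ℝ) < a n (dSeq h α n) := by exact_mod_cast ha _ _ h2
    have hB : (0:ℝ) < b n (dSeq h α n) := by exact_mod_cast hb _ _ h2
    have hddT : dd (tailT a b h α n) = dSeq h α n :=
      dd_eq h2 (tailT_gt ha hb hpos hab hα n) (tailT_le ha hb hpos hab hα n)
    have hXs : X a b (Phi a b h α) (n+1) = Fm a b n (X a b (Phi a b h α) n) := rfl
    rw [hXs, ih]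
    unfold Fm
    rw [hddT]
    rw [tailT_succ ha hb hpos hab hα n]
    field_simp
    ring

lemma D_Phi (ha : ∀ k j, 2 ≤ j → 0 < a k j) (hb : ∀ k j, 2 ≤ j → 0 < b k j)
    (hpos : ∀ k j, 2 ≤ j → 0 < h k j)
    (hab : ∀ k j, 2 ≤ j → b k j * h k j = a k j * j * (j - 1))
    (hα : ∀ k, 1 ≤ α k) (n : ℕ) :
    D a b (Phi a b h α) n = dSeq h α n := by
  rw [D_eq_dd, X_Phi ha hb hpos hab hα n]
  exact dd_eq (dSeq_two_le hpos hα n) (tailT_gt ha hb hpos hab hα n)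
    (tailT_le ha hb hpos hab hα n)

lemma Phi_mem_Ioc (ha : ∀ k j, 2 ≤ j → 0 < a k j) (hb : ∀ k j, 2 ≤ j → 0 < b k j)
    (hpos : ∀ k j, 2 ≤ j → 0 < h k j)
    (hab : ∀ k j, 2 ≤ j → b k j * h k j = a k j * j * (j - 1))
    (hα : ∀ k, 1 ≤ α k) : Phi a b h α ∈ Ioc (0:ℝ) 1 := by
  rw [Phi_eq_tailT]
  have h2 : 2 ≤ dSeq h α 0 := dSeq_two_le hpos hα 0
  have hdR : (2:ℝ) ≤ (dSeq h α 0 : ℝ) := by exact_mod_cast h2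
  constructor
  · have := tailT_gt ha hb hpos hab hα 0
    have h0 : (0:ℝ) < 1 / (dSeq h α 0 : ℝ) := by positivity
    linarith
  · have := tailT_le ha hb hpos hab hα 0
    have h1 : 1 / ((dSeq h α 0 : ℝ) - 1) ≤ 1 := by
      rw [div_le_one (by linarith)]
      linarith
    linarith

lemma alpha_Phi (ha : ∀ k j, 2 ≤ j → 0 < a k j) (hb : ∀ k j, 2 ≤ j → 0 < b k j)
    (hpos : ∀ k j, 2 ≤ j → 0 < h k j)
    (hab : ∀ k j, 2 ≤ j → b k j * h k j = a k j * j * (j - 1))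
    (hα : ∀ k, 1 ≤ α k) (k : ℕ) :
    alpha a b h (Phi a b h α) k = α k := by
  cases k with
  | zero =>
    have h0 : alpha a b h (Phi a b h α) 0 = D a b (Phi a b h α) 0 - 1 := rfl
    rw [h0, D_Phi ha hb hpos hab hα 0]
    have : dSeq h α 0 = α 0 + 1 := rfl
    omega
  | succ k =>
    have h0 : alpha a b h (Phi a b h α) (k+1)
        = D a b (Phi a b h α) (k+1) - h k (D a b (Phi a b h α) k) := rfl
    rw [h0, D_Phi ha hb hpos hab hα (k+1), D_Phi ha hb hpos hab hα k]
    have : dSeq h α (k+1) = h k (dSeq h α k) + α (k+1) := rfl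
    omega

end Correspond

section Meas

variable {a b h : ℕ → ℕ → ℕ}

lemma tsum_eq_toReal_ofReal {f : ℕ → ℝ} (hf : ∀ n, 0 ≤ f n) :
    ∑' n, f n = (∑' n, ENNReal.ofReal (f n)).toReal := by
  by_cases hs : Summable f
  · rw [← ENNReal.ofReal_tsum_of_nonneg hf hs, ENNReal.toReal_ofReal (tsum_nonneg hf)]
  · rw [tsum_eq_zero_of_not_summable hs]
    have htop : ∑' n, ENNReal.ofReal (f n) = ⊤ := by
      by_contra hne
      apply hs
      have hcoe : (fun n => ENNReal.ofReal (f n)) = fun n => (((f n).toNNReal : NNReal) : ENNReal) :=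
        rfl
      rw [hcoe] at hne
      have h1 : Summable fun n => (f n).toNNReal := ENNReal.tsum_coe_ne_top_iff_summable.mp hne
      have h2 : (fun n => (((f n).toNNReal : NNReal) : ℝ)) = f :=
        funext fun n => Real.coe_toNNReal _ (hf n)
      have h3 := NNReal.summable_coe.mpr h1
      rwa [h2] at h3
    rw [htop, ENNReal.toReal_top]

lemma measurable_dSeq (h : ℕ → ℕ → ℕ) : ∀ i, Measurable fun α : ℕ → ℕ => dSeq h α i := by
  intro i
  induction i with
  | zero => exact (measurable_of_countable fun m : ℕ => m + 1).comp (measurable_pi_apply 0)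
  | succ i ih =>
    exact (measurable_of_countable fun pr : ℕ × ℕ => h i pr.1 + pr.2).comp
      (ih.prodMk (measurable_pi_apply (i+1)))

lemma measurable_PhiTerm (a b h : ℕ → ℕ → ℕ) (n : ℕ) :
    Measurable fun α : ℕ → ℕ =>
      (∏ i ∈ Finset.range n, (a i (dSeq h α i) : ℝ) / (b i (dSeq h α i) : ℝ))
        * (1 / (dSeq h α n : ℝ)) := by
  apply Measurable.mul
  · apply Finset.measurable_prod
    intro i _
    exact (measurable_of_countable fun m : ℕ => (a i m : ℝ) / (b i m : ℝ)).comp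
      (measurable_dSeq h i)
  · exact (measurable_of_countable fun m : ℕ => (1 : ℝ) / (m : ℝ)).comp (measurable_dSeq h n)

lemma measurable_Phi (a b h : ℕ → ℕ → ℕ) : Measurable (Phi a b h) := by
  have hrepr : Phi a b h = fun α =>
      (∑' n, ENNReal.ofReal ((∏ i ∈ Finset.range n,
        (a i (dSeq h α i) : ℝ) / (b i (dSeq h α i) : ℝ)) * (1 / (dSeq h α n : ℝ)))).toReal := by
    funext α
    apply tsum_eq_toReal_ofReal
    intro n
    apply mul_nonneg
    · apply Finset.prod_nonneg; intro i _; positivity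
    · positivity
  rw [hrepr]
  apply ENNReal.measurable_toReal.comp
  apply Measurable.ennreal_tsum
  intro n
  exact ENNReal.measurable_ofReal.comp (measurable_PhiTerm a b h n)

lemma measurable_tendSet (a b h : ℕ → ℕ → ℕ) :
    MeasurableSet {x : ℝ | Tendsto (fun n => alpha a b h x n) atTop atTop} := by
  have hrepr : {x : ℝ | Tendsto (fun n => alpha a b h x n) atTop atTop}
      = ⋂ K : ℕ, ⋃ N : ℕ, ⋂ n : ℕ, ⋂ (_ : N ≤ n), {x : ℝ | K ≤ alpha a b h x n} := by
    ext x
    simp only [mem_setOf_eq, mem_iInter, mem_iUnion, tendsto_atTop_atTop]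
  rw [hrepr]
  refine MeasurableSet.iInter fun K => MeasurableSet.iUnion fun N =>
    MeasurableSet.iInter fun n => MeasurableSet.iInter fun _ => ?_
  have : {x : ℝ | K ≤ alpha a b h x n} = (fun x => alpha a b h x n) ⁻¹' (Ici K) := rfl
  rw [this]
  exact (measurable_alpha a b h n) (measurableSet_Ici)

end Meas

end Main

/-- Assume Hypothesis (H).  If the difference-ROE symbols `ξ_k` are independent
and identically distributed (all laws equal to a fixed probability measure `p` on the positive
integers), then the distribution `μ_ξ = Φ_*P` is singular with respect to Lebesgue measure. -/
theorem singular_of_iid (a b h : ℕ → ℕ → ℕ)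
    (ha : ∀ k j, 2 ≤ j → 0 < a k j) (hb : ∀ k j, 2 ≤ j → 0 < b k j)
    (hpos : ∀ k j, 2 ≤ j → 0 < h k j)
    (hab : ∀ k j, 2 ≤ j → b k j * h k j = a k j * j * (j - 1))
    (l : ℕ → ℝ) (hlpos : ∀ k, 2 ≤ k → 0 < l k)
    (hlsum : Summable fun m : ℕ => l (m + 2))
    (hH : ∀ x : ℝ, InfiniteROE a b x → ∀ m : ℕ,
      (b m (D a b x m) : ℝ) /
          ((a m (D a b x m) : ℝ) * (D a b x m : ℝ) * ((D a b x m : ℝ) - 1)) < l (m + 2))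
    (p : Measure ℕ) [IsProbabilityMeasure p] (hp0 : p {0} = 0)
    (P : Measure (ℕ → ℕ)) [IsProbabilityMeasure P]
    (hlaw : ∀ k : ℕ, P.map (fun α => α k) = p)
    (hindep : ProbabilityTheory.iIndepFun
      (fun k (α : ℕ → ℕ) => α k) P) :
    (P.map (Phi a b h)).MutuallySingular volume := by
  classical
  set NN : Set ℝ := Ioc (0:ℝ) 1 ∩ {x : ℝ | Tendsto (fun n => alpha a b h x n) atTop atTop}ᶜ
    with hNdef
  have hNmeas : MeasurableSet NN := measurableSet_Ioc.inter (measurable_tendSet a b h).compl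
  have hNnull : volume NN = 0 := by
    have hsub : NN ⊆ {x | x ∈ Ioc (0:ℝ) 1 ∧ ¬ InfiniteROE a b x}
        ∪ {x | x ∈ Ioc (0:ℝ) 1 ∧ InfiniteROE a b x ∧
            ¬ Tendsto (fun n => alpha a b h x n) atTop atTop} := by
      rintro x ⟨hx, hnt⟩
      by_cases hInf : InfiniteROE a b x
      · exact Or.inr ⟨hx, hInf, hnt⟩
      · exact Or.inl ⟨hx, hInf⟩
    exact measure_mono_null hsub (measure_union_null (notInf_null ha hb hpos hab)
      (null2 ha hb hpos hab hlpos hlsum hH))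
  have hbad1 : P {α : ℕ → ℕ | ∃ k, α k = 0} = 0 := by
    have hsub : {α : ℕ → ℕ | ∃ k, α k = 0} = ⋃ k : ℕ, (fun α : ℕ → ℕ => α k) ⁻¹' {0} := by
      ext α; simp
    rw [hsub, measure_iUnion_null_iff]
    intro k
    calc P ((fun α : ℕ → ℕ => α k) ⁻¹' {0})
        = (P.map (fun α : ℕ → ℕ => α k)) {0} :=
          (Measure.map_apply (measurable_pi_apply k) (MeasurableSet.singleton 0)).symm
      _ = p {0} := by rw [hlaw k]
      _ = 0 := hp0
  obtain ⟨v, hv0, hv⟩ : ∃ v : ℕ, v ≠ 0 ∧ p {v} ≠ 0 := by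
    by_contra hcon
    push_neg at hcon
    have huniv : (univ : Set ℕ) ⊆ {0} ∪ ⋃ k : ℕ, {k+1} := by
      intro n _
      rcases n with _ | m
      · exact Or.inl rfl
      · exact Or.inr (mem_iUnion.mpr ⟨m, rfl⟩)
    have h1 : p univ ≤ p ({0} : Set ℕ) + p (⋃ k : ℕ, {(k+1 : ℕ)}) :=
      le_trans (measure_mono huniv) (measure_union_le _ _)
    have h2 : p (⋃ k : ℕ, ({(k+1 : ℕ)} : Set ℕ)) = 0 := by
      rw [measure_iUnion_null_iff]
      exact fun k => hcon (k+1) (by omega)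
    rw [hp0, h2] at h1
    simp only [add_zero, nonpos_iff_eq_zero] at h1
    have huniv1 : p univ = 1 := measure_univ
    rw [huniv1] at h1
    exact one_ne_zero h1
  have hbad2 : P {α : ℕ → ℕ | Tendsto (fun k => α k) atTop atTop} = 0 := by
    have hsub : {α : ℕ → ℕ | Tendsto (fun k => α k) atTop atTop}
        ⊆ ⋃ N' : ℕ, {α : ℕ → ℕ | ∀ k, N' ≤ k → α k ≠ v} := by
      intro α hα
      rw [mem_setOf_eq, tendsto_atTop_atTop] at hα
      obtain ⟨N', hN'⟩ := hα (v+1)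
      exact mem_iUnion.mpr ⟨N', fun k hk => by have := hN' k hk; omega⟩
    refine measure_mono_null hsub ?_
    rw [measure_iUnion_null_iff]
    intro N'
    have hc1 : p {v}ᶜ < 1 := by
      have h1 : p {v}ᶜ = 1 - p {v} := prob_compl_eq_one_sub (MeasurableSet.singleton v)
      rw [h1]
      exact ENNReal.sub_lt_self ENNReal.one_ne_top one_ne_zero hv
    have hMbound : ∀ M : ℕ, P {α : ℕ → ℕ | ∀ k, N' ≤ k → α k ≠ v} ≤ (p {v}ᶜ) ^ M := by
      intro M
      have hsub2 : {α : ℕ → ℕ | ∀ k, N' ≤ k → α k ≠ v}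
          ⊆ ⋂ k ∈ Finset.Ico N' (N' + M), (fun α : ℕ → ℕ => α k) ⁻¹' ({v}ᶜ) := by
        intro α hα
        simp only [mem_iInter, Finset.mem_Ico]
        intro k hk
        exact hα k hk.1
      refine le_trans (measure_mono hsub2) ?_
      have hprod := hindep.measure_inter_preimage_eq_mul (Finset.Ico N' (N' + M))
        (sets := fun _ => ({v}ᶜ : Set ℕ)) (fun i _ => (MeasurableSet.singleton v).compl)
      rw [hprod]
      have heach : ∀ k, P ((fun α : ℕ → ℕ => α k) ⁻¹' ({v}ᶜ)) = p {v}ᶜ := by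
        intro k
        rw [← hlaw k, Measure.map_apply (measurable_pi_apply k)
          (MeasurableSet.singleton v).compl]
      rw [Finset.prod_congr rfl (fun k _ => heach k), Finset.prod_const, Nat.card_Ico]
      simp
    have htend := ENNReal.tendsto_pow_atTop_nhds_zero_of_lt_one hc1
    have hle0 := ge_of_tendsto htend (Filter.Eventually.of_forall hMbound)
    exact le_antisymm hle0 zero_le
  refine ⟨NNᶜ, hNmeas.compl, ?_, by rwa [compl_compl]⟩
  rw [Measure.map_apply (measurable_Phi a b h) hNmeas.compl]
  have hsub : Phi a b h ⁻¹' NNᶜ ⊆ {α : ℕ → ℕ | ∃ k, α k = 0}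
      ∪ {α : ℕ → ℕ | Tendsto (fun k => α k) atTop atTop} := by
    intro α hα
    by_cases hone : ∀ k, 1 ≤ α k
    · right
      have hmem : Phi a b h α ∈ Ioc (0:ℝ) 1 := Phi_mem_Ioc ha hb hpos hab hone
      have hN : Phi a b h α ∉ NN := hα
      rw [hNdef] at hN
      simp only [mem_inter_iff, mem_compl_iff, mem_setOf_eq, not_and, not_not] at hN
      have htd := hN hmem
      have hfun : (fun n => alpha a b h (Phi a b h α) n) = fun n => α n :=
        funext fun n => alpha_Phi ha hb hpos hab hone n
      rw [mem_setOf_eq]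
      rwa [hfun] at htd
    · left
      push_neg at hone
      obtain ⟨k, hk⟩ := hone
      exact ⟨k, by omega⟩
  exact measure_mono_null hsub (measure_union_null hbad1 hbad2)


end ROE
end

section
/- For λ-almost every x ∈ (0,1), every positive integer i occurs only finitely many times among the difference Silvester digits of x; that is, λ-almost every x satisfies: for every i ≥ 1 the set {k : α_k(x) = i} is finite. -/
open MeasureTheory Set

namespace ROE

/-- The Silvester expansion is the ROE with `a_n ≡ 1` and `b_n ≡ 1`, for which
`h_n(j) = j(j-1)`. -/
def silvesterA : ℕ → ℕ → ℕ := fun _ _ => 1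

def silvesterB : ℕ → ℕ → ℕ := fun _ _ => 1

def silvesterH : ℕ → ℕ → ℕ := fun _ j => j * (j - 1)


open Filter

local notation "sX" => X silvesterA silvesterB
local notation "sD" => D silvesterA silvesterB

lemma sX_succ (x : ℝ) (k : ℕ) :
    sX x (k+1) = sX x k - 1 / (sD x k : ℝ) := by
  simp [X, D, silvesterA, silvesterB]

lemma floor_pos_of_mem {y : ℝ} (hy : y ∈ Set.Ioo (0:ℝ) 1) : 1 ≤ ⌊1/y⌋ := by
  have : (1:ℝ) < 1 / y := one_lt_one_div hy.1 hy.2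
  exact Int.le_floor.2 (by exact_mod_cast this.le)

lemma sD_cast {x : ℝ} {k : ℕ} (h : sX x k ∈ Set.Ioo (0:ℝ) 1) :
    (sD x k : ℝ) = (⌊1 / sX x k⌋ : ℝ) + 1 := by
  have h1 := floor_pos_of_mem h
  have h2 : ((⌊1 / sX x k⌋).toNat : ℤ) = ⌊1 / sX x k⌋ := Int.toNat_of_nonneg (by linarith)
  simp only [D, Nat.cast_add, Nat.cast_one]
  congr 1
  exact_mod_cast congrArg (fun z : ℤ => (z : ℝ)) h2

lemma two_le_sD {x : ℝ} {k : ℕ} (h : sX x k ∈ Set.Ioo (0:ℝ) 1) : 2 ≤ sD x k := by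
  have h1 := floor_pos_of_mem h
  have : 1 ≤ (⌊1 / sX x k⌋).toNat := by omega
  simp only [D]; omega

lemma sX_mem_Ioc {x : ℝ} {k : ℕ} (h : sX x k ∈ Set.Ioo (0:ℝ) 1) :
    sX x k ∈ Set.Ioc (1 / (sD x k : ℝ)) (1 / ((sD x k : ℝ) - 1)) := by
  obtain ⟨h0, h1⟩ := h
  have hf := floor_pos_of_mem ⟨h0, h1⟩
  have hd : (sD x k : ℝ) = (⌊1 / sX x k⌋ : ℝ) + 1 := sD_cast ⟨h0, h1⟩
  have hfl : (⌊1 / sX x k⌋ : ℝ) ≤ 1 / sX x k := Int.floor_le _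
  have hfu : 1 / sX x k < (⌊1 / sX x k⌋ : ℝ) + 1 := Int.lt_floor_add_one _
  have hfpos : (1:ℝ) ≤ (⌊1 / sX x k⌋ : ℝ) := by exact_mod_cast hf
  have hu := (div_lt_iff₀ h0).1 hfu
  have hl := (le_div_iff₀ h0).1 hfl
  constructor
  · rw [hd, div_lt_iff₀ (by linarith)]
    nlinarith
  · rw [hd, le_div_iff₀ (by linarith : (0:ℝ) < (⌊1 / sX x k⌋ : ℝ) + 1 - 1)]
    nlinarith

lemma sX_mem_Ioo {x : ℝ} (hx : x ∈ Set.Ioo (0:ℝ) 1) : ∀ k, sX x k ∈ Set.Ioo (0:ℝ) 1 := by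
  intro k
  induction k with
  | zero => exact hx
  | succ k ih =>
      have h2 := two_le_sD ih
      have hmem := sX_mem_Ioc ih
      have hd2 : (2:ℝ) ≤ (sD x k : ℝ) := by exact_mod_cast h2
      rw [sX_succ]
      constructor
      · have := hmem.1; linarith
      · have hpos : (0:ℝ) < 1 / (sD x k : ℝ) := by positivity
        have := ih.2; linarith

lemma infiniteROE_of_mem {x : ℝ} (hx : x ∈ Set.Ioo (0:ℝ) 1) :
    InfiniteROE silvesterA silvesterB x := sX_mem_Ioo hx

lemma one_div_sub_one_div {d : ℝ} (hd : 2 ≤ d) :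
    1 / (d - 1) - 1 / d = 1 / (d * (d - 1)) := by
  have h0 : d ≠ 0 := by linarith
  have h1 : d - 1 ≠ 0 := by linarith
  field_simp
  ring

lemma sD_growth {x : ℝ} (hx : x ∈ Set.Ioo (0:ℝ) 1) (k : ℕ) :
    sD x k * (sD x k - 1) < sD x (k+1) := by
  have hk := sX_mem_Ioo hx k
  have hk1 := sX_mem_Ioo hx (k+1)
  have h2 := two_le_sD hk
  have hd2 : (2:ℝ) ≤ (sD x k : ℝ) := by exact_mod_cast h2
  have hmem := sX_mem_Ioc hk
  have hub : sX x (k+1) ≤ 1 / ((sD x k : ℝ) * ((sD x k : ℝ) - 1)) := by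
    rw [sX_succ, ← one_div_sub_one_div hd2]
    have := hmem.2; linarith
  have hprodpos : (0:ℝ) < (sD x k : ℝ) * ((sD x k : ℝ) - 1) := by nlinarith
  have hge : ((sD x k : ℝ) * ((sD x k : ℝ) - 1)) ≤ 1 / sX x (k+1) := by
    rw [le_div_iff₀ hk1.1]
    calc (sD x k : ℝ) * ((sD x k : ℝ) - 1) * sX x (k+1)
        ≤ (sD x k : ℝ) * ((sD x k : ℝ) - 1) * (1 / ((sD x k : ℝ) * ((sD x k : ℝ) - 1))) := by
          exact mul_le_mul_of_nonneg_left hub (le_of_lt hprodpos)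
      _ = 1 := by field_simp; exact div_self (ne_of_gt (by linarith))
  have hcast : ((sD x k * (sD x k - 1) : ℕ) : ℝ) = (sD x k : ℝ) * ((sD x k : ℝ) - 1) := by
    push_cast [Nat.cast_sub (by omega : 1 ≤ sD x k)]; ring
  have hfl : (sD x k * (sD x k - 1) : ℕ) ≤ ⌊1 / sX x (k+1)⌋ := by
    rw [Int.le_floor]
    rw [← hcast] at hge
    exact_mod_cast hge
  have h3 : (sD x k * (sD x k - 1) : ℕ) ≤ (⌊1 / sX x (k+1)⌋).toNat := by omega
  have h4 : sD x (k+1) = (⌊1 / sX x (k+1)⌋).toNat + 1 := rfl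
  omega

lemma sD_lb {x : ℝ} (hx : x ∈ Set.Ioo (0:ℝ) 1) (k : ℕ) : k + 2 ≤ sD x k := by
  induction k with
  | zero => exact two_le_sD (sX_mem_Ioo hx 0)
  | succ k ih =>
      have h1 := sD_growth hx k
      have h2 := Nat.le_mul_of_pos_right (sD x k) (by omega : 0 < sD x k - 1)
      omega

/-- partial sums of reciprocals of a digit sequence -/
noncomputable def csum (j : ℕ → ℕ) (k : ℕ) : ℝ := ∑ l ∈ Finset.range k, 1 / (j l : ℝ)

lemma sX_eq {x : ℝ} (hx : x ∈ Set.Ioo (0:ℝ) 1) (k : ℕ) : sX x k = x - csum (sD x) k := by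
  induction k with
  | zero => simp [csum, X]
  | succ k ih =>
      rw [sX_succ, ih]
      simp only [csum, Finset.sum_range_succ]
      ring

lemma tail_bound (j : ℕ → ℕ) (hj : ∀ l, 2 ≤ j l) (m n : ℕ) (hmn : m < n)
    (hgrow : ∀ l, l + 1 < n → j l * (j l - 1) < j (l + 1)) :
    (∑ l ∈ Finset.Ico m n, 1 / (j l : ℝ))
      + 1 / ((j (n-1) : ℝ) * ((j (n-1) : ℝ) - 1)) ≤ 1 / ((j m : ℝ) - 1) := by
  have hcast : ∀ l, (2:ℝ) ≤ (j l : ℝ) := fun l => by exact_mod_cast hj l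
  induction n, hmn using Nat.le_induction with
  | base =>
      rw [Finset.sum_Ico_succ_top le_rfl, Finset.Ico_self, Finset.sum_empty]
      simp only [Nat.succ_sub_one]
      have := one_div_sub_one_div (hcast m)
      linarith
  | succ n hn ih =>
      have hgrow' : ∀ l, l + 1 < n → j l * (j l - 1) < j (l + 1) := fun l hl =>
        hgrow l (by omega)
      have ihn := ih hgrow'
      rw [Finset.sum_Ico_succ_top (by omega : m ≤ n)]
      simp only [Nat.add_sub_cancel]
      -- 1/(j n) + 1/(j n * (j n - 1)) = 1/(j n - 1)
      have hid := one_div_sub_one_div (hcast n)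
      -- j n ≥ j (n-1) * (j (n-1) - 1) + 1
      have hg := hgrow (n-1) (by omega)
      rw [show n - 1 + 1 = n from by omega] at hg
      have hgR : ((j (n-1) : ℝ) * ((j (n-1) : ℝ) - 1)) + 1 ≤ (j n : ℝ) := by
        have : (j (n-1) * (j (n-1) - 1) + 1 : ℕ) ≤ j n := hg
        have hc : ((j (n-1) * (j (n-1) - 1) + 1 : ℕ) : ℝ)
            = (j (n-1) : ℝ) * ((j (n-1) : ℝ) - 1) + 1 := by
          push_cast [Nat.cast_sub (by have := hj (n-1); omega : 1 ≤ j (n-1))]; ring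
        rw [← hc]; exact_mod_cast this
      have hp1 : (0:ℝ) < (j (n-1) : ℝ) * ((j (n-1) : ℝ) - 1) := by
        have := hcast (n-1); nlinarith
      have hmono : 1 / ((j n : ℝ) - 1) ≤ 1 / ((j (n-1) : ℝ) * ((j (n-1) : ℝ) - 1)) :=
        one_div_le_one_div_of_le hp1 (by linarith)
      linarith

lemma D_eq_of_mem_Ioc (d : ℕ) (hd : 2 ≤ d) {y : ℝ}
    (hy : y ∈ Set.Ioc (1 / (d:ℝ)) (1 / ((d:ℝ) - 1))) : (⌊1/y⌋).toNat + 1 = d := by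
  have hd2 : (2:ℝ) ≤ (d:ℝ) := by exact_mod_cast hd
  have hdpos : (0:ℝ) < (d:ℝ) := by linarith
  have hy0 : 0 < y := lt_trans (by positivity) hy.1
  have h1 : 1 < y * (d:ℝ) := by
    have := (div_lt_iff₀ hdpos).1 hy.1; linarith
  have hup : 1 / y < (d:ℝ) := (div_lt_iff₀ hy0).2 (by linarith)
  have hlo : (d:ℝ) - 1 ≤ 1 / y := by
    rw [le_div_iff₀ hy0]
    have h2 := hy.2
    rw [le_div_iff₀ (by linarith : (0:ℝ) < (d:ℝ) - 1)] at h2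
    linarith
  have hfloor : ⌊1/y⌋ = (d:ℤ) - 1 := by
    rw [Int.floor_eq_iff]
    constructor
    · push_cast; linarith
    · push_cast; linarith
  omega

lemma digits_of_mem_interval (j : ℕ → ℕ) (hj : ∀ l, 2 ≤ j l) (n : ℕ) (hn : 1 ≤ n)
    (hgrow : ∀ l, l + 1 < n → j l * (j l - 1) < j (l + 1))
    {x : ℝ} (hx : x ∈ Set.Ioc (csum j n)
      (csum j n + 1 / ((j (n-1) : ℝ) * ((j (n-1) : ℝ) - 1)))) :
    (∀ l < n, sD x l = j l) ∧ ∀ l ≤ n, sX x l = x - csum j l := by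
  have hcast : ∀ l, (2:ℝ) ≤ (j l : ℝ) := fun l => by exact_mod_cast hj l
  have hmono : ∀ a b, a ≤ b → csum j a ≤ csum j b := by
    intro a b hab
    apply Finset.sum_le_sum_of_subset_of_nonneg (Finset.range_subset_range.2 hab)
    intro l _ _
    positivity
  have hstep : ∀ l, csum j (l+1) = csum j l + 1 / (j l : ℝ) := by
    intro l; simp [csum, Finset.sum_range_succ]
  -- main induction
  have key : ∀ l ≤ n, (sX x l = x - csum j l) ∧ (∀ m < l, sD x m = j m) := by
    intro l
    induction l with
    | zero => intro _; exact ⟨by simp [csum, X], fun m hm => absurd hm (by omega)⟩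
    | succ l ih =>
        intro hl1
        obtain ⟨hXl, hDl⟩ := ih (by omega)
        have hln : l < n := by omega
        -- x - csum j l ∈ Ioc (1/(j l)) (1/(j l - 1))
        have hylo : 1 / (j l : ℝ) < x - csum j l := by
          have h1 : csum j (l+1) ≤ csum j n := hmono _ _ (by omega)
          have h2 := hstep l
          have := hx.1
          linarith
        have hyhi : x - csum j l ≤ 1 / ((j l : ℝ) - 1) := by
          have htb := tail_bound j hj l n hln hgrow
          have hs : csum j n - csum j l = ∑ k ∈ Finset.Ico l n, 1 / (j k : ℝ) := by
            rw [Finset.sum_Ico_eq_sub _ (by omega : l ≤ n)]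
            rfl
          have := hx.2
          linarith [htb, hx.2, hs.symm.le, hs.le]
        have hD : sD x l = j l := by
          have : sD x l = (⌊1 / sX x l⌋).toNat + 1 := rfl
          rw [this, hXl]
          exact D_eq_of_mem_Ioc (j l) (hj l) ⟨hylo, hyhi⟩
        refine ⟨?_, ?_⟩
        · rw [sX_succ, hXl, hD, hstep l]; ring
        · intro m hm
          rcases Nat.lt_succ_iff_lt_or_eq.1 hm with h | h
          · exact hDl m h
          · rw [h]; exact hD
  exact ⟨fun l hl => (key n le_rfl).2 l hl, fun l hl => (key l hl).1⟩

lemma interval_subset_Ioc01 (j : ℕ → ℕ) (hj : ∀ l, 2 ≤ j l) (n : ℕ) (hn : 1 ≤ n)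
    (hgrow : ∀ l, l + 1 < n → j l * (j l - 1) < j (l + 1)) :
    Set.Ioc (csum j n) (csum j n + 1 / ((j (n-1) : ℝ) * ((j (n-1) : ℝ) - 1)))
      ⊆ Set.Ioc (0:ℝ) 1 := by
  have hcast : ∀ l, (2:ℝ) ≤ (j l : ℝ) := fun l => by exact_mod_cast hj l
  intro x hx
  have hc0 : 0 < csum j n := by
    apply Finset.sum_pos
    · intro l _
      have h2 := hcast l
      positivity
    · exact Finset.nonempty_range_iff.2 (by omega)
  constructor
  · exact lt_trans hc0 hx.1
  · have htb := tail_bound j hj 0 n (by omega) hgrow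
    have hs : csum j n = ∑ k ∈ Finset.Ico 0 n, 1 / (j k : ℝ) := by
      rw [Finset.sum_Ico_eq_sub _ (by omega : 0 ≤ n)]
      simp [csum]
    have hj0 : (2:ℝ) ≤ (j 0 : ℝ) := hcast 0
    have : 1 / ((j 0 : ℝ) - 1) ≤ 1 := by
      rw [div_le_one (by linarith)]; linarith
    have := hx.2
    linarith [htb, hs.le, hs.symm.le]

/-- extension of a finite digit tuple by the dummy value 2 -/
def extv (m : ℕ) (v : Fin (m+1) → ℕ) : ℕ → ℕ :=
  fun l => if h : l < m + 1 then v ⟨l, h⟩ else 2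

/-- admissibility-with-lower-bound predicate for rank `m+1` tuples -/
def Pv (m : ℕ) (v : Fin (m+1) → ℕ) : Prop :=
  (∀ l, 2 ≤ extv m v l) ∧
  (∀ l, l + 1 < m + 1 → extv m v l * (extv m v l - 1) < extv m v (l + 1)) ∧
  m + 2 ≤ extv m v m

noncomputable def Hr (m : ℕ) (v : Fin (m+1) → ℕ) : ℝ :=
  (extv m v m : ℝ) * ((extv m v m : ℝ) - 1)

noncomputable def Jset (m : ℕ) (v : Fin (m+1) → ℕ) : Set ℝ :=
  Set.Ioc (csum (extv m v) (m+1)) (csum (extv m v) (m+1) + 1 / Hr m v)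

noncomputable def Iset (m i : ℕ) (v : Fin (m+1) → ℕ) : Set ℝ :=
  Set.Ioc (csum (extv m v) (m+1) + 1 / (Hr m v + i))
    (csum (extv m v) (m+1) + 1 / (Hr m v + i - 1))

lemma Hr_ge {m : ℕ} {v : Fin (m+1) → ℕ} (hv : Pv m v) :
    ((m:ℝ) + 2) * ((m:ℝ) + 1) ≤ Hr m v ∧ (2:ℝ) ≤ Hr m v := by
  have h1 : (m:ℝ) + 2 ≤ (extv m v m : ℝ) := by exact_mod_cast hv.2.2
  have h2 : (2:ℝ) ≤ (extv m v m : ℝ) := by exact_mod_cast hv.1 m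
  constructor
  · unfold Hr; nlinarith
  · unfold Hr; nlinarith

lemma cover_s9 (i m : ℕ) (hi : 1 ≤ i) :
    {x : ℝ | x ∈ Set.Ioo (0:ℝ) 1 ∧ alpha silvesterA silvesterB silvesterH x (m+1) = i}
      ⊆ ⋃ (v : {v : Fin (m+1) → ℕ // Pv m v}), Iset m i v.1 := by
  rintro x ⟨hx, hax⟩
  set v : Fin (m+1) → ℕ := fun l => sD x l.1 with hv
  have hext : ∀ l < m + 1, extv m v l = sD x l := by
    intro l hl; simp [extv, hl, hv]
  have hPv : Pv m v := by
    refine ⟨?_, ?_, ?_⟩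
    · intro l
      by_cases hl : l < m + 1
      · rw [hext l hl]; exact two_le_sD (sX_mem_Ioo hx l)
      · simp [extv, hl]
    · intro l hl
      rw [hext l (by omega), hext (l+1) (by omega)]
      exact sD_growth hx l
    · rw [hext m (by omega)]; exact sD_lb hx m
  refine Set.mem_iUnion.2 ⟨⟨v, hPv⟩, ?_⟩
  have hcs : csum (extv m v) (m+1) = csum (sD x) (m+1) := by
    unfold csum
    apply Finset.sum_congr rfl
    intro l hl
    rw [hext l (Finset.mem_range.1 hl)]
  -- D x (m+1) = h + i
  have hgrow := sD_growth hx m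
  have halpha : alpha silvesterA silvesterB silvesterH x (m+1)
      = sD x (m+1) - sD x m * (sD x m - 1) := rfl
  have hD : sD x (m+1) = sD x m * (sD x m - 1) + i := by
    rw [halpha] at hax; omega
  have hmemIoc := sX_mem_Ioc (sX_mem_Ioo hx (m+1))
  have hXeq := sX_eq hx (m+1)
  have hDcast : (sD x (m+1) : ℝ) = Hr m v + i := by
    rw [hD]
    unfold Hr
    rw [hext m (by omega)]
    push_cast [Nat.cast_sub (by have := two_le_sD (sX_mem_Ioo hx m); omega : 1 ≤ sD x m)]
    ring
  rw [hXeq, hDcast] at hmemIoc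
  unfold Iset
  rw [hcs]
  constructor
  · have := hmemIoc.1; linarith
  · have h2 := hmemIoc.2
    have : 1 / (Hr m v + (i:ℝ) - 1) = 1 / (Hr m v + (i:ℝ) + -1) := by ring_nf
    have h3 : Hr m v + (i:ℝ) - 1 = Hr m v + (i:ℝ) - 1 := rfl
    have : (1:ℝ) / (Hr m v + ↑i - 1) = 1 / (Hr m v + ↑i - 1) := rfl
    calc x ≤ csum (sD x) (m+1) + 1 / (Hr m v + ↑i - 1) := by linarith
      _ = _ := rfl

lemma Jset_digits {m : ℕ} {v : Fin (m+1) → ℕ} (hv : Pv m v) {x : ℝ} (hx : x ∈ Jset m v) :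
    ∀ l < m + 1, sD x l = extv m v l := by
  have := digits_of_mem_interval (extv m v) hv.1 (m+1) (by omega) hv.2.1
    (by simpa [Jset, Hr, Nat.add_sub_cancel] using hx)
  exact this.1

lemma Iset_subset_Jset {m i : ℕ} {v : Fin (m+1) → ℕ} (hv : Pv m v) (hi : 1 ≤ i) :
    Iset m i v ⊆ Jset m v := by
  have hH := (Hr_ge hv).2
  have hi1 : (1:ℝ) ≤ (i:ℝ) := by exact_mod_cast hi
  apply Set.Ioc_subset_Ioc
  · have : (0:ℝ) < 1 / (Hr m v + i) := by positivity
    linarith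
  · have : 1 / (Hr m v + (i:ℝ) - 1) ≤ 1 / Hr m v :=
      one_div_le_one_div_of_le (by linarith) (by linarith)
    linarith

lemma measure_bound (i m : ℕ) (hi : 1 ≤ i) :
    volume {x : ℝ | x ∈ Set.Ioo (0:ℝ) 1 ∧ alpha silvesterA silvesterB silvesterH x (m+1) = i}
      ≤ ENNReal.ofReal (1 / (((m:ℝ) + 1) * ((m:ℝ) + 2))) := by
  set ε : ℝ := 1 / (((m:ℝ) + 1) * ((m:ℝ) + 2)) with hε
  have hεpos : 0 < ε := by positivity
  have hi1 : (1:ℝ) ≤ (i:ℝ) := by exact_mod_cast hi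
  -- key per-cylinder inequality
  have hIle : ∀ v : {v : Fin (m+1) → ℕ // Pv m v},
      volume (Iset m i v.1) ≤ ENNReal.ofReal ε * volume (Jset m v.1) := by
    rintro ⟨v, hv⟩
    obtain ⟨hH1, hH2⟩ := Hr_ge hv
    set H := Hr m v with hHdef
    set c := csum (extv m v) (m+1) with hcdef
    have hP : (0:ℝ) < ((m:ℝ) + 1) * ((m:ℝ) + 2) := by positivity
    have h1 : (0:ℝ) < H + i - 1 := by linarith
    have h2 : (0:ℝ) < H + i := by linarith
    have hIvol : volume (Iset m i v) = ENNReal.ofReal (1 / (H + i - 1) - 1 / (H + i)) := by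
      unfold Iset
      rw [Real.volume_Ioc]
      congr 1
      ring
    have hJvol : volume (Jset m v) = ENNReal.ofReal (1 / H) := by
      unfold Jset
      rw [Real.volume_Ioc]
      congr 1
      ring
    rw [hIvol, hJvol, ← ENNReal.ofReal_mul hεpos.le]
    apply ENNReal.ofReal_le_ofReal
    have hdiff : 1 / (H + i - 1) - 1 / (H + i) = 1 / ((H + i - 1) * (H + i)) := by
      field_simp; ring
    have hmul : ε * (1 / H) = 1 / ((((m:ℝ) + 1) * ((m:ℝ) + 2)) * H) := by
      rw [hε, one_div_mul_one_div]
    rw [hdiff, hmul]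
    apply one_div_le_one_div_of_le (by positivity)
    have := mul_le_mul (by linarith : ((m:ℝ) + 1) * ((m:ℝ) + 2) ≤ H + i - 1)
      (by linarith : H ≤ H + i) (by linarith : (0:ℝ) ≤ H)
      (by linarith : (0:ℝ) ≤ H + i - 1)
    linarith
  -- disjointness of the J-intervals
  have hdisj : Pairwise (Function.onFun Disjoint
      (fun v : {v : Fin (m+1) → ℕ // Pv m v} => Jset m v.1)) := by
    intro u w huw
    rw [Function.onFun]
    rw [Set.disjoint_left]
    intro x hxu hxw
    have d1 := Jset_digits u.2 hxu
    have d2 := Jset_digits w.2 hxw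
    apply huw
    apply Subtype.ext
    funext l
    have e1 := d1 l.1 l.2
    have e2 := d2 l.1 l.2
    have h1 : extv m u.1 l.1 = u.1 l := by
      simp only [extv]; rw [dif_pos l.2]
    have h2 : extv m w.1 l.1 = w.1 l := by
      simp only [extv]; rw [dif_pos l.2]
    rw [← h1, ← h2, ← e1, ← e2]
  have hmeas : ∀ v : {v : Fin (m+1) → ℕ // Pv m v}, MeasurableSet (Jset m v.1) :=
    fun v => measurableSet_Ioc
  have hJsub : (⋃ v : {v : Fin (m+1) → ℕ // Pv m v}, Jset m v.1) ⊆ Set.Ioc (0:ℝ) 1 := by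
    apply Set.iUnion_subset
    rintro ⟨v, hv⟩
    have := interval_subset_Ioc01 (extv m v) hv.1 (m+1) (by omega) hv.2.1
    simpa [Jset, Hr, Nat.add_sub_cancel] using this
  calc volume {x : ℝ | x ∈ Set.Ioo (0:ℝ) 1 ∧ alpha silvesterA silvesterB silvesterH x (m+1) = i}
      ≤ volume (⋃ v : {v : Fin (m+1) → ℕ // Pv m v}, Iset m i v.1) :=
        measure_mono (cover_s9 i m hi)
    _ ≤ ∑' v : {v : Fin (m+1) → ℕ // Pv m v}, volume (Iset m i v.1) := measure_iUnion_le _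
    _ ≤ ∑' v : {v : Fin (m+1) → ℕ // Pv m v}, ENNReal.ofReal ε * volume (Jset m v.1) :=
        ENNReal.tsum_le_tsum hIle
    _ = ENNReal.ofReal ε * ∑' v : {v : Fin (m+1) → ℕ // Pv m v}, volume (Jset m v.1) :=
        ENNReal.tsum_mul_left
    _ = ENNReal.ofReal ε * volume (⋃ v : {v : Fin (m+1) → ℕ // Pv m v}, Jset m v.1) := by
        rw [measure_iUnion hdisj hmeas]
    _ ≤ ENNReal.ofReal ε * volume (Set.Ioc (0:ℝ) 1) :=
        mul_le_mul_right (measure_mono hJsub) _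
    _ ≤ ENNReal.ofReal ε := by
        rw [Real.volume_Ioc]
        simp


set_option maxHeartbeats 1000000 in
/-- For `λ`-almost every `x ∈ (0,1)`, every positive integer `i` occurs only
finitely many times among the difference Silvester digits `α_k(x)` of `x`. -/
theorem silvester_ae_finitely_many_occurrences :
    ∀ᵐ x ∂(volume.restrict (Set.Ioo (0 : ℝ) 1)),
      InfiniteROE silvesterA silvesterB x →
        ∀ i : ℕ, 1 ≤ i → {k : ℕ | alpha silvesterA silvesterB silvesterH x k = i}.Finite := by
  have key : ∀ i : ℕ, 1 ≤ i → ∀ᵐ x ∂(volume : Measure ℝ),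
      {k : ℕ | x ∈ Set.Ioo (0:ℝ) 1 ∧
        alpha silvesterA silvesterB silvesterH x k = i}.Finite := by
    intro i hi
    set s : ℕ → Set ℝ := fun n =>
      {x | x ∈ Set.Ioo (0:ℝ) 1 ∧ alpha silvesterA silvesterB silvesterH x n = i} with hs
    have h0 : volume (s 0) ≤ 1 := by
      calc volume (s 0) ≤ volume (Set.Ioo (0:ℝ) 1) := measure_mono (fun x hx => hx.1)
        _ = 1 := by simp [Real.volume_Ioo]
    have h1 : ∀ m : ℕ, volume (s (m+1)) ≤ ENNReal.ofReal (1/(((m:ℝ)+1)*((m:ℝ)+2))) :=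
      fun m => measure_bound i m hi
    have hsummable : Summable (fun m : ℕ => 1/(((m:ℝ)+1)*((m:ℝ)+2))) := by
      have hbase : Summable (fun n : ℕ => 1 / ((n:ℝ)) ^ 2) :=
        Real.summable_one_div_nat_pow.2 (by omega)
      have hshift : Summable (fun m : ℕ => 1 / ((m:ℝ)+1) ^ 2) := by
        have := (summable_nat_add_iff (f := fun n : ℕ => 1 / ((n:ℝ)) ^ 2) 1).2 hbase
        simpa using this
      apply Summable.of_nonneg_of_le (fun m => by positivity) _ hshift
      intro m
      apply one_div_le_one_div_of_le (by positivity)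
      nlinarith [Nat.cast_nonneg (α := ℝ) m]
    have h2 : (∑' m : ℕ, ENNReal.ofReal (1/(((m:ℝ)+1)*((m:ℝ)+2)))) ≠ ⊤ := by
      rw [← ENNReal.ofReal_tsum_of_nonneg (fun m => by positivity) hsummable]
      exact ENNReal.ofReal_ne_top
    have hsum : (∑' n, volume (s n)) ≠ ⊤ := by
      rw [tsum_eq_zero_add' ENNReal.summable]
      refine ENNReal.add_ne_top.2 ⟨(lt_of_le_of_lt h0 ENNReal.one_lt_top).ne, ?_⟩
      exact (lt_of_le_of_lt (ENNReal.tsum_le_tsum h1) (lt_top_iff_ne_top.2 h2)).ne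
    exact ae_finite_setOf_mem hsum
  have key2 : ∀ᵐ x ∂(volume : Measure ℝ), ∀ i : ℕ, 1 ≤ i →
      {k : ℕ | x ∈ Set.Ioo (0:ℝ) 1 ∧
        alpha silvesterA silvesterB silvesterH x k = i}.Finite := by
    rw [ae_all_iff]
    intro i
    rcases Nat.lt_or_ge i 1 with h | h
    · exact ae_of_all _ (fun x hx => absurd hx (by omega))
    · exact (key i h).mono (fun x hx _ => hx)
  have key3 := ae_restrict_of_ae (μ := (volume : Measure ℝ)) (s := Set.Ioo (0:ℝ) 1) key2
  filter_upwards [key3, ae_restrict_mem measurableSet_Ioo] with x hx hmem _ i hi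
  exact (hx i hi).subset (fun k hk => ⟨hmem, hk⟩)

end ROE
end

section
/- If there exists a positive integer i₀ such that Σ_{k≥1} p_k({i₀}) = +∞, then the probability measure μ_ξ (the distribution of the random variable with independent symbols of the difference Silvester expansion, with laws p_k) is singular with respect to Lebesgue measure: μ_ξ ⊥ λ. -/
open MeasureTheory Set

namespace ROE

noncomputable def PhiS : (ℕ → ℕ) → ℝ := Phi silvesterA silvesterB silvesterH

variable {α : ℕ → ℕ}

lemma two_le_dSeq (hα : ∀ k, 1 ≤ α k) : ∀ k, 2 ≤ dSeq silvesterH α k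
  | 0 => by have := hα 0; simp [dSeq]; omega
  | k + 1 => by
    have h := two_le_dSeq hα k
    have h1 := hα (k + 1)
    have h2 : 1 ≤ dSeq silvesterH α k - 1 := by omega
    have h3 : 2 * 1 ≤ dSeq silvesterH α k * (dSeq silvesterH α k - 1) :=
      Nat.mul_le_mul h h2
    simp only [dSeq, silvesterH]
    omega

lemma pow_lt_dSeq (hα : ∀ k, 1 ≤ α k) : ∀ k, 2 ^ k + 1 ≤ dSeq silvesterH α k
  | 0 => by simpa using two_le_dSeq hα 0
  | k + 1 => by
    have h := pow_lt_dSeq hα k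
    have h2 := two_le_dSeq hα k
    have h1 := hα (k + 1)
    have h3 : 2 * 2 ^ k ≤ dSeq silvesterH α k * (dSeq silvesterH α k - 1) :=
      Nat.mul_le_mul h2 (by omega)
    simp only [dSeq, silvesterH]
    have : 2 ^ (k + 1) = 2 * 2 ^ k := by ring
    omega

lemma dSeq_succ_ge (hα : ∀ k, 1 ≤ α k) (m : ℕ) :
    dSeq silvesterH α m * (dSeq silvesterH α m - 1) + 1 ≤ dSeq silvesterH α (m + 1) := by
  have h1 := hα (m + 1)
  simp only [dSeq, silvesterH]
  omega

noncomputable def tailSum (α : ℕ → ℕ) (m : ℕ) : ℝ :=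
  ∑' k, 1 / (dSeq silvesterH α (m + k) : ℝ)

lemma summable_tail (hα : ∀ k, 1 ≤ α k) (m : ℕ) :
    Summable (fun n => 1 / (dSeq silvesterH α (m + n) : ℝ)) := by
  have hge : Summable (fun n : ℕ => (1 / 2 : ℝ) ^ n) :=
    summable_geometric_of_lt_one (by norm_num) (by norm_num)
  refine Summable.of_nonneg_of_le (fun n => by positivity) (fun n => ?_) hge
  have h1 : (2 : ℕ) ^ n ≤ dSeq silvesterH α (m + n) := by
    have := pow_lt_dSeq hα (m + n)
    have h2 : (2 : ℕ) ^ n ≤ 2 ^ (m + n) := Nat.pow_le_pow_right (by norm_num) (by omega)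
    omega
  have h1' : (2 : ℝ) ^ n ≤ (dSeq silvesterH α (m + n) : ℝ) := by exact_mod_cast h1
  rw [one_div, one_div, inv_pow]
  exact inv_anti₀ (by positivity) (by simpa using h1')

lemma tail_eq (hα : ∀ k, 1 ≤ α k) (m : ℕ) :
    tailSum α m = 1 / (dSeq silvesterH α m : ℝ) + tailSum α (m + 1) := by
  unfold tailSum
  have h2 : (∑' n : ℕ, 1 / (dSeq silvesterH α (m + (n + 1)) : ℝ))
      = ∑' n : ℕ, 1 / (dSeq silvesterH α (m + 1 + n) : ℝ) :=
    tsum_congr fun n => by rw [show m + (n + 1) = m + 1 + n from by omega]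
  rw [Summable.tsum_eq_zero_add (summable_tail hα m), h2, Nat.add_zero]

lemma tail_lb (hα : ∀ k, 1 ≤ α k) (m : ℕ) :
    1 / (dSeq silvesterH α m : ℝ) ≤ tailSum α m := by
  have := Summable.le_tsum (summable_tail hα m) 0 (fun j _ => by positivity)
  simpa [tailSum, one_div] using this

lemma cast_two_le (hα : ∀ k, 1 ≤ α k) (m : ℕ) : (2 : ℝ) ≤ (dSeq silvesterH α m : ℝ) := by
  exact_mod_cast two_le_dSeq hα m

lemma tail_ub (hα : ∀ k, 1 ≤ α k) (m : ℕ) :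
    tailSum α m ≤ 1 / ((dSeq silvesterH α m : ℝ) - 1) := by
  have key : ∀ N, (∑ n ∈ Finset.range N, 1 / (dSeq silvesterH α (m + n) : ℝ))
      + 1 / ((dSeq silvesterH α (m + N) : ℝ) - 1) ≤ 1 / ((dSeq silvesterH α m : ℝ) - 1) := by
    intro N
    induction N with
    | zero => simp
    | succ N ih =>
      rw [Finset.sum_range_succ]
      have h2 := cast_two_le hα (m + N) (α := α)
      have h2' := cast_two_le hα (m + N + 1) (α := α)
      have hstep : 1 / (dSeq silvesterH α (m + N) : ℝ)
          + 1 / ((dSeq silvesterH α (m + N + 1) : ℝ) - 1)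
          ≤ 1 / ((dSeq silvesterH α (m + N) : ℝ) - 1) := by
        set e : ℝ := (dSeq silvesterH α (m + N) : ℝ) with he
        have hmul : e * (e - 1) ≤ (dSeq silvesterH α (m + N + 1) : ℝ) - 1 := by
          have := dSeq_succ_ge hα (m + N)
          have hc : ((dSeq silvesterH α (m + N) * (dSeq silvesterH α (m + N) - 1) + 1 : ℕ) : ℝ)
              ≤ (dSeq silvesterH α (m + N + 1) : ℝ) := by exact_mod_cast this
          have h1 : (1 : ℕ) ≤ dSeq silvesterH α (m + N) := by
            have := two_le_dSeq hα (m + N); omega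
          push_cast [Nat.cast_sub h1] at hc
          linarith
        have hpos : (0 : ℝ) < e * (e - 1) := by nlinarith
        calc 1 / e + 1 / ((dSeq silvesterH α (m + N + 1) : ℝ) - 1)
            ≤ 1 / e + 1 / (e * (e - 1)) := by
              gcongr
            _ = 1 / (e - 1) := by
              have h0 : e ≠ 0 := by linarith
              have h1 : e - 1 ≠ 0 := by linarith
              field_simp
              ring
      calc (∑ n ∈ Finset.range N, 1 / (dSeq silvesterH α (m + n) : ℝ))
            + 1 / (dSeq silvesterH α (m + N) : ℝ)
            + 1 / ((dSeq silvesterH α (m + N + 1) : ℝ) - 1)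
          ≤ (∑ n ∈ Finset.range N, 1 / (dSeq silvesterH α (m + n) : ℝ))
            + 1 / ((dSeq silvesterH α (m + N) : ℝ) - 1) := by linarith
        _ ≤ _ := ih
  refine Summable.tsum_le_of_sum_range_le (summable_tail hα m) fun N => ?_
  have h2 := cast_two_le hα (m + N) (α := α)
  have := key N
  have hnn : 0 ≤ 1 / ((dSeq silvesterH α (m + N) : ℝ) - 1) :=
    one_div_nonneg.2 (by linarith)
  linarith

def Eset (i₀ : ℕ) : ℕ → ℕ → Set ℝ
  | 0, d => Set.Icc (1 / ((d * (d - 1) + i₀ : ℕ) : ℝ)) (1 / (((d * (d - 1) + i₀ : ℕ) : ℝ) - 1))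
  | n + 1, d => ⋃ j : ℕ,
      (fun y => -(1 / ((d * (d - 1) + j + 1 : ℕ) : ℝ)) + y) ⁻¹' Eset i₀ n (d * (d - 1) + j + 1)

lemma measurableSet_Eset (i₀ : ℕ) : ∀ n d, MeasurableSet (Eset i₀ n d) := by
  intro n
  induction n with
  | zero => intro d; exact measurableSet_Icc
  | succ n ih =>
    intro d
    exact MeasurableSet.iUnion fun j => (ih _).preimage (measurable_id.const_add _)

lemma tail_mem_Eset (hα : ∀ k, 1 ≤ α k) (i₀ : ℕ) :
    ∀ n m, α (m + n + 1) = i₀ → tailSum α (m + 1) ∈ Eset i₀ n (dSeq silvesterH α m) := by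
  intro n
  induction n with
  | zero =>
    intro m hi
    simp only [Nat.add_zero] at hi
    have hd : dSeq silvesterH α m * (dSeq silvesterH α m - 1) + i₀ = dSeq silvesterH α (m + 1) := by
      simp only [dSeq, silvesterH]
      omega
    simp only [Eset, hd]
    exact ⟨tail_lb hα (m + 1), tail_ub hα (m + 1)⟩
  | succ n ih =>
    intro m hi
    have hj : dSeq silvesterH α m * (dSeq silvesterH α m - 1) + (α (m + 1) - 1) + 1
        = dSeq silvesterH α (m + 1) := by
      have := hα (m + 1)
      simp only [dSeq, silvesterH]
      omega
    simp only [Eset]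
    refine Set.mem_iUnion.2 ⟨α (m + 1) - 1, ?_⟩
    rw [Set.mem_preimage, hj]
    have heq : -(1 / (dSeq silvesterH α (m + 1) : ℝ)) + tailSum α (m + 1)
        = tailSum α (m + 1 + 1) := by
      rw [tail_eq hα (m + 1)]; ring
    rw [heq]
    exact ih (m + 1) (by rw [show m + 1 + n + 1 = m + (n + 1) + 1 from by omega]; exact hi)

lemma cast_e (d j : ℕ) (hd : 2 ≤ d) :
    ((d * (d - 1) + j + 1 : ℕ) : ℝ) = (d : ℝ) * ((d : ℝ) - 1) + (j : ℝ) + 1 := by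
  have h1 : (1 : ℕ) ≤ d := by omega
  push_cast [Nat.cast_sub h1]
  ring

lemma aux_key {h j c : ℝ} (hh : 2 ≤ h) (hj : 0 ≤ j) (hc : 0 ≤ c) :
    c / ((h + j + 1) * (h + j + 1 - 1) * (h + j + 1)) ≤ c / (h + 1) * (1 / (h + j) - 1 / (h + j + 1)) := by
  have p1 : (0 : ℝ) < h + j := by linarith
  have p2 : (0 : ℝ) < h + j + 1 := by linarith
  have p3 : (0 : ℝ) < h + 1 := by linarith
  have e2 : 1 / (h + j) - 1 / (h + j + 1) = 1 / ((h + j) * (h + j + 1)) := by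
    field_simp
    ring
  rw [e2, div_mul_div_comm, mul_one]
  have base : 1 / ((h + j + 1) * (h + j + 1 - 1) * (h + j + 1))
      ≤ 1 / ((h + 1) * ((h + j) * (h + j + 1))) := by
    apply one_div_le_one_div_of_le (by positivity)
    nlinarith [mul_nonneg (mul_nonneg p2.le p1.le) hj]
  calc c / ((h + j + 1) * (h + j + 1 - 1) * (h + j + 1))
      = c * (1 / ((h + j + 1) * (h + j + 1 - 1) * (h + j + 1))) := by rw [mul_one_div]
    _ ≤ c * (1 / ((h + 1) * ((h + j) * (h + j + 1)))) := mul_le_mul_of_nonneg_left base hc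
    _ = c / ((h + 1) * ((h + j) * (h + j + 1))) := by rw [mul_one_div]

lemma telescope_bound {h c : ℝ} (hh : 2 ≤ h) (hc : 0 ≤ c) (N : ℕ) :
    ∑ j ∈ Finset.range N, c / (h + 1) * (1 / (h + (j : ℝ)) - 1 / (h + (j : ℝ) + 1))
      ≤ c / ((h + 1) * h) := by
  rw [← Finset.mul_sum]
  have e : ∀ j ∈ Finset.range N, (1 / (h + (j : ℝ)) - 1 / (h + (j : ℝ) + 1))
      = ((fun i : ℕ => 1 / (h + (i : ℝ))) j - (fun i : ℕ => 1 / (h + (i : ℝ))) (j + 1)) :=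
    fun j _ => by push_cast; ring
  rw [Finset.sum_congr rfl e, Finset.sum_range_sub' (f := fun i : ℕ => 1 / (h + (i : ℝ)))]
  have hN : (0 : ℝ) < h + N := by have : (0:ℝ) ≤ (N:ℝ) := Nat.cast_nonneg N; linarith
  have h1 : 1 / (h + ((0:ℕ) : ℝ)) - 1 / (h + (N : ℝ)) ≤ 1 / h := by
    have : (0:ℝ) < 1 / (h + (N:ℝ)) := by positivity
    norm_num
    linarith
  have h2 : (0:ℝ) ≤ c / (h + 1) := by positivity
  calc c / (h + 1) * (1 / (h + ((0:ℕ) : ℝ)) - 1 / (h + (N : ℝ)))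
      ≤ c / (h + 1) * (1 / h) := mul_le_mul_of_nonneg_left h1 h2
    _ = c / ((h + 1) * h) := by rw [div_mul_div_comm, mul_one]

lemma final_ineq {x c : ℝ} (hx : 2 ≤ x) (hc : 0 ≤ c) :
    c / ((x * (x - 1) + 1) * (x * (x - 1))) ≤ c * (2 / 3) / (x * (x - 1) * x) := by
  have p1 : (0 : ℝ) < x * (x - 1) := by nlinarith
  rw [div_le_div_iff₀ (by nlinarith) (by nlinarith)]
  nlinarith [mul_nonneg (mul_nonneg hc p1.le) (show (0:ℝ) ≤ (2*x - 1) * (x - 2) by nlinarith)]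

lemma volume_Eset_le (i₀ : ℕ) (hi₀ : 1 ≤ i₀) :
    ∀ n d, 2 ≤ d →
      volume (Eset i₀ n d) ≤ ENNReal.ofReal ((2 / 3) ^ n / ((d : ℝ) * ((d : ℝ) - 1) * (d : ℝ))) := by
  intro n
  induction n with
  | zero =>
    intro d hd
    have hx2 : (2 : ℝ) ≤ (d : ℝ) := by exact_mod_cast hd
    have hR : ((d * (d - 1) + i₀ : ℕ) : ℝ) = (d:ℝ) * ((d:ℝ) - 1) + (i₀ : ℝ) := by
      have h1 : (1 : ℕ) ≤ d := by omega
      push_cast [Nat.cast_sub h1]; ring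
    have hi₀' : (1 : ℝ) ≤ (i₀ : ℝ) := by exact_mod_cast hi₀
    have hR1 : (d:ℝ) * ((d:ℝ) - 1) + 1 ≤ ((d * (d - 1) + i₀ : ℕ) : ℝ) := by rw [hR]; linarith
    have hRx : (d:ℝ) ≤ ((d * (d - 1) + i₀ : ℕ) : ℝ) := by nlinarith
    have hRpos : (0 : ℝ) < ((d * (d - 1) + i₀ : ℕ) : ℝ) - 1 := by nlinarith
    simp only [Eset]
    rw [Real.volume_Icc]
    apply ENNReal.ofReal_le_ofReal
    set R : ℝ := ((d * (d - 1) + i₀ : ℕ) : ℝ)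
    have e1 : 1 / (R - 1) - 1 / R = 1 / (R * (R - 1)) := by
      have h0 : R ≠ 0 := by nlinarith
      have h1 : R - 1 ≠ 0 := by nlinarith
      field_simp
      ring
    rw [e1, pow_zero]
    have hle : (d:ℝ) * ((d:ℝ) - 1) * (d:ℝ) ≤ R * (R - 1) := by nlinarith
    have hpos : (0 : ℝ) < (d:ℝ) * ((d:ℝ) - 1) * (d:ℝ) :=
      mul_pos (mul_pos (by linarith) (by linarith)) (by linarith)
    exact one_div_le_one_div_of_le hpos hle
  | succ n ih =>
    intro d hd
    have hx2 : (2 : ℝ) ≤ (d : ℝ) := by exact_mod_cast hd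
    have hh2 : (2 : ℝ) ≤ (d:ℝ) * ((d:ℝ) - 1) := by nlinarith
    have hc : (0 : ℝ) ≤ (2/3 : ℝ) ^ n := by positivity
    simp only [Eset]
    calc volume (⋃ j : ℕ, (fun y => -(1 / ((d * (d - 1) + j + 1 : ℕ) : ℝ)) + y) ⁻¹'
            Eset i₀ n (d * (d - 1) + j + 1))
        ≤ ∑' j : ℕ, volume ((fun y => -(1 / ((d * (d - 1) + j + 1 : ℕ) : ℝ)) + y) ⁻¹'
            Eset i₀ n (d * (d - 1) + j + 1)) := measure_iUnion_le _
      _ = ∑' j : ℕ, volume (Eset i₀ n (d * (d - 1) + j + 1)) :=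
          tsum_congr fun j => measure_preimage_add volume _ _
      _ ≤ ∑' j : ℕ, ENNReal.ofReal ((2 / 3) ^ n /
            (((d * (d - 1) + j + 1 : ℕ) : ℝ) * (((d * (d - 1) + j + 1 : ℕ) : ℝ) - 1)
              * ((d * (d - 1) + j + 1 : ℕ) : ℝ))) := by
          refine ENNReal.tsum_le_tsum fun j => ih _ ?_
          have h2 : 2 * 1 ≤ d * (d - 1) := Nat.mul_le_mul hd (by omega)
          omega
      _ ≤ ENNReal.ofReal ((2 / 3) ^ (n + 1) / ((d:ℝ) * ((d:ℝ) - 1) * (d:ℝ))) := by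
          refine ENNReal.tsum_le_of_sum_range_le fun N => ?_
          have key : ∀ j : ℕ, (2 / 3 : ℝ) ^ n /
              (((d * (d - 1) + j + 1 : ℕ) : ℝ) * (((d * (d - 1) + j + 1 : ℕ) : ℝ) - 1)
                * ((d * (d - 1) + j + 1 : ℕ) : ℝ))
              ≤ (2/3 : ℝ) ^ n / ((d:ℝ) * ((d:ℝ) - 1) + 1) *
                  (1 / ((d:ℝ) * ((d:ℝ) - 1) + (j:ℝ)) - 1 / ((d:ℝ) * ((d:ℝ) - 1) + (j:ℝ) + 1)) := by
            intro j
            rw [cast_e d j hd]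
            exact aux_key hh2 (Nat.cast_nonneg j) hc
          have nonneg : ∀ j ∈ Finset.range N, (0:ℝ) ≤ (2/3 : ℝ) ^ n / ((d:ℝ) * ((d:ℝ) - 1) + 1) *
              (1 / ((d:ℝ) * ((d:ℝ) - 1) + (j:ℝ)) - 1 / ((d:ℝ) * ((d:ℝ) - 1) + (j:ℝ) + 1)) := by
            intro j _
            have hj : (0:ℝ) ≤ (j:ℝ) := Nat.cast_nonneg j
            have p1 : (0:ℝ) < (d:ℝ) * ((d:ℝ) - 1) + (j:ℝ) := by linarith
            have hmono : 1 / ((d:ℝ) * ((d:ℝ) - 1) + (j:ℝ) + 1) ≤ 1 / ((d:ℝ) * ((d:ℝ) - 1) + (j:ℝ)) :=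
              one_div_le_one_div_of_le p1 (by linarith)
            have : (0:ℝ) ≤ (2/3 : ℝ) ^ n / ((d:ℝ) * ((d:ℝ) - 1) + 1) := by positivity
            nlinarith
          calc ∑ j ∈ Finset.range N, ENNReal.ofReal ((2 / 3 : ℝ) ^ n /
                (((d * (d - 1) + j + 1 : ℕ) : ℝ) * (((d * (d - 1) + j + 1 : ℕ) : ℝ) - 1)
                  * ((d * (d - 1) + j + 1 : ℕ) : ℝ)))
              ≤ ∑ j ∈ Finset.range N, ENNReal.ofReal ((2/3 : ℝ) ^ n / ((d:ℝ) * ((d:ℝ) - 1) + 1) *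
                  (1 / ((d:ℝ) * ((d:ℝ) - 1) + (j:ℝ)) - 1 / ((d:ℝ) * ((d:ℝ) - 1) + (j:ℝ) + 1))) :=
                Finset.sum_le_sum fun j _ => ENNReal.ofReal_le_ofReal (key j)
            _ = ENNReal.ofReal (∑ j ∈ Finset.range N, (2/3 : ℝ) ^ n / ((d:ℝ) * ((d:ℝ) - 1) + 1) *
                  (1 / ((d:ℝ) * ((d:ℝ) - 1) + (j:ℝ)) - 1 / ((d:ℝ) * ((d:ℝ) - 1) + (j:ℝ) + 1))) :=
                (ENNReal.ofReal_sum_of_nonneg nonneg).symm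
            _ ≤ ENNReal.ofReal ((2/3 : ℝ) ^ n / (((d:ℝ) * ((d:ℝ) - 1) + 1) * ((d:ℝ) * ((d:ℝ) - 1)))) :=
                ENNReal.ofReal_le_ofReal (telescope_bound hh2 hc N)
            _ ≤ ENNReal.ofReal ((2 / 3) ^ (n + 1) / ((d:ℝ) * ((d:ℝ) - 1) * (d:ℝ))) := by
                apply ENNReal.ofReal_le_ofReal
                rw [pow_succ]
                exact final_ineq hx2 hc

def Vset (i₀ k : ℕ) : Set ℝ :=
  ⋃ j : ℕ, (fun y => -(1 / ((j + 2 : ℕ) : ℝ)) + y) ⁻¹' Eset i₀ k (j + 2)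

lemma measurableSet_Vset (i₀ k : ℕ) : MeasurableSet (Vset i₀ k) :=
  MeasurableSet.iUnion fun _ => (measurableSet_Eset i₀ k _).preimage (measurable_id.const_add _)

lemma volume_Vset_le (i₀ : ℕ) (hi₀ : 1 ≤ i₀) (k : ℕ) :
    volume (Vset i₀ k) ≤ ENNReal.ofReal ((2 / 3 : ℝ) ^ k) := by
  have hc : (0:ℝ) ≤ (2/3:ℝ) ^ k := by positivity
  calc volume (Vset i₀ k)
      ≤ ∑' j : ℕ, volume ((fun y => -(1 / ((j + 2 : ℕ) : ℝ)) + y) ⁻¹' Eset i₀ k (j + 2)) :=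
        measure_iUnion_le _
    _ = ∑' j : ℕ, volume (Eset i₀ k (j + 2)) :=
        tsum_congr fun j => measure_preimage_add volume _ _
    _ ≤ ∑' j : ℕ, ENNReal.ofReal ((2 / 3) ^ k /
          (((j + 2 : ℕ) : ℝ) * (((j + 2 : ℕ) : ℝ) - 1) * ((j + 2 : ℕ) : ℝ))) :=
        ENNReal.tsum_le_tsum fun j => volume_Eset_le i₀ hi₀ k (j + 2) (by omega)
    _ ≤ ENNReal.ofReal ((2 / 3 : ℝ) ^ k) := by
        refine ENNReal.tsum_le_of_sum_range_le fun N => ?_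
        have key : ∀ j : ℕ, (2 / 3 : ℝ) ^ k /
            (((j + 2 : ℕ) : ℝ) * (((j + 2 : ℕ) : ℝ) - 1) * ((j + 2 : ℕ) : ℝ))
            ≤ (2/3:ℝ)^k * ((fun i : ℕ => 1 / ((i:ℝ) + 1)) j - (fun i : ℕ => 1 / ((i:ℝ) + 1)) (j+1)) := by
          intro j
          have hy : ((j + 2 : ℕ) : ℝ) = (j:ℝ) + 2 := by push_cast; ring
          rw [hy]
          simp only
          have p1 : (0:ℝ) < (j:ℝ) + 1 := by positivity
          have p2 : (0:ℝ) < (j:ℝ) + 2 := by positivity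
          have e2 : 1 / ((j:ℝ) + 1) - 1 / ((j:ℝ) + 1 + 1) = 1 / (((j:ℝ)+1) * ((j:ℝ)+2)) := by
            have h1 : ((j:ℝ) + 1) ≠ 0 := ne_of_gt p1
            have h2 : ((j:ℝ) + 1 + 1) ≠ 0 := by positivity
            rw [div_sub_div _ _ h1 h2]
            congr 1 <;> ring
          have hcast : ((j + 1 : ℕ) : ℝ) = (j:ℝ) + 1 := by push_cast; ring
          rw [hcast, e2, mul_one_div]
          have base : 1 / (((j:ℝ)+2) * ((j:ℝ)+2-1) * ((j:ℝ)+2)) ≤ 1 / (((j:ℝ)+1) * ((j:ℝ)+2)) := by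
            apply one_div_le_one_div_of_le (by positivity)
            nlinarith [mul_pos (mul_pos p1 p2) p1]
          calc (2 / 3 : ℝ) ^ k / (((j:ℝ)+2) * ((j:ℝ)+2-1) * ((j:ℝ)+2))
              = (2 / 3 : ℝ) ^ k * (1 / (((j:ℝ)+2) * ((j:ℝ)+2-1) * ((j:ℝ)+2))) := by rw [mul_one_div]
            _ ≤ (2 / 3 : ℝ) ^ k * (1 / (((j:ℝ)+1) * ((j:ℝ)+2))) := mul_le_mul_of_nonneg_left base hc
            _ = (2 / 3 : ℝ) ^ k / (((j:ℝ)+1) * ((j:ℝ)+2)) := by rw [mul_one_div]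
        have nonneg : ∀ j ∈ Finset.range N, (0:ℝ) ≤ (2/3:ℝ)^k *
            ((fun i : ℕ => 1 / ((i:ℝ) + 1)) j - (fun i : ℕ => 1 / ((i:ℝ) + 1)) (j+1)) := by
          intro j _
          simp only
          have p1 : (0:ℝ) < (j:ℝ) + 1 := by positivity
          have hmono : 1 / (((j+1:ℕ):ℝ) + 1) ≤ 1 / ((j:ℝ) + 1) := by
            apply one_div_le_one_div_of_le p1
            push_cast; linarith
          nlinarith
        calc ∑ j ∈ Finset.range N, ENNReal.ofReal ((2 / 3 : ℝ) ^ k /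
              (((j + 2 : ℕ) : ℝ) * (((j + 2 : ℕ) : ℝ) - 1) * ((j + 2 : ℕ) : ℝ)))
            ≤ ∑ j ∈ Finset.range N, ENNReal.ofReal ((2/3:ℝ)^k *
                ((fun i : ℕ => 1 / ((i:ℝ) + 1)) j - (fun i : ℕ => 1 / ((i:ℝ) + 1)) (j+1))) :=
              Finset.sum_le_sum fun j _ => ENNReal.ofReal_le_ofReal (key j)
          _ = ENNReal.ofReal (∑ j ∈ Finset.range N, (2/3:ℝ)^k *
                ((fun i : ℕ => 1 / ((i:ℝ) + 1)) j - (fun i : ℕ => 1 / ((i:ℝ) + 1)) (j+1))) :=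
              (ENNReal.ofReal_sum_of_nonneg nonneg).symm
          _ ≤ ENNReal.ofReal ((2 / 3 : ℝ) ^ k) := by
              apply ENNReal.ofReal_le_ofReal
              rw [← Finset.mul_sum, Finset.sum_range_sub' (f := fun i : ℕ => 1 / ((i:ℝ) + 1))]
              have hN : (0:ℝ) < ((N:ℝ) + 1) := by positivity
              have : 1 / (((0:ℕ):ℝ) + 1) - 1 / ((N:ℝ) + 1) ≤ 1 := by
                have : (0:ℝ) < 1 / ((N:ℝ) + 1) := by positivity
                norm_num
                linarith
              nlinarith


noncomputable section

def Sset (i₀ : ℕ) : Set ℝ := ⋂ N : ℕ, ⋃ k : ℕ, ⋃ _ : N ≤ k, Vset i₀ k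

lemma measurableSet_Sset (i₀ : ℕ) : MeasurableSet (Sset i₀) :=
  MeasurableSet.iInter fun _ => MeasurableSet.iUnion fun k =>
    MeasurableSet.iUnion fun _ => measurableSet_Vset i₀ k

lemma volume_Sset (i₀ : ℕ) (hi₀ : 1 ≤ i₀) : volume (Sset i₀) = 0 := by
  have hbound : ∀ N : ℕ, volume (Sset i₀) ≤ ENNReal.ofReal (3 * (2/3:ℝ)^N) := by
    intro N
    have hsub : Sset i₀ ⊆ ⋃ j : ℕ, Vset i₀ (N + j) := by
      intro x hx
      have h1 := Set.mem_iInter.1 hx N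
      obtain ⟨k, hk⟩ := Set.mem_iUnion.1 h1
      obtain ⟨hNk, hxk⟩ := Set.mem_iUnion.1 hk
      exact Set.mem_iUnion.2 ⟨k - N, by rwa [show N + (k - N) = k from by omega]⟩
    calc volume (Sset i₀) ≤ volume (⋃ j : ℕ, Vset i₀ (N + j)) := measure_mono hsub
      _ ≤ ∑' j : ℕ, volume (Vset i₀ (N + j)) := measure_iUnion_le _
      _ ≤ ∑' j : ℕ, ENNReal.ofReal ((2/3:ℝ) ^ (N + j)) :=
          ENNReal.tsum_le_tsum fun j => volume_Vset_le i₀ hi₀ (N + j)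
      _ ≤ ENNReal.ofReal (3 * (2/3:ℝ)^N) := by
          refine ENNReal.tsum_le_of_sum_range_le fun M => ?_
          rw [← ENNReal.ofReal_sum_of_nonneg (fun j _ => by positivity)]
          apply ENNReal.ofReal_le_ofReal
          have hsum : ∑ j ∈ Finset.range M, (2/3:ℝ)^(N+j)
              = (2/3:ℝ)^N * ∑ j ∈ Finset.range M, (2/3:ℝ)^j := by
            rw [Finset.mul_sum]
            exact Finset.sum_congr rfl fun j _ => by rw [pow_add]
          rw [hsum]
          have hgeom : ∑ j ∈ Finset.range M, (2/3:ℝ)^j ≤ 3 := by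
            rw [geom_sum_eq (show (2/3:ℝ) ≠ 1 by norm_num) M]
            have h0 : (0:ℝ) ≤ (2/3:ℝ)^M := by positivity
            have h1 : (2/3:ℝ)^M ≤ 1 := pow_le_one₀ (by norm_num) (by norm_num)
            rw [div_le_iff_of_neg (by norm_num : (2/3:ℝ) - 1 < 0)]
            linarith
          have hp : (0:ℝ) ≤ (2/3:ℝ)^N := by positivity
          nlinarith
  have htend : Filter.Tendsto (fun N : ℕ => ENNReal.ofReal (3 * (2/3:ℝ)^N)) Filter.atTop (nhds 0) := by
    have h1 : Filter.Tendsto (fun N : ℕ => 3 * (2/3:ℝ)^N) Filter.atTop (nhds 0) := by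
      have h2 := tendsto_pow_atTop_nhds_zero_of_lt_one (show (0:ℝ) ≤ 2/3 by norm_num)
        (show (2/3:ℝ) < 1 by norm_num)
      simpa using h2.const_mul (3:ℝ)
    simpa using ENNReal.tendsto_ofReal h1
  have hle : volume (Sset i₀) ≤ 0 := ge_of_tendsto' htend hbound
  simpa using hle

lemma PhiS_eq_tailSum (α : ℕ → ℕ) : PhiS α = tailSum α 0 := by
  unfold PhiS Phi tailSum
  simp [silvesterA, silvesterB]

lemma PhiS_mem_Vset {α : ℕ → ℕ} (hα : ∀ k, 1 ≤ α k) {i₀ k : ℕ} (hk : α (k + 1) = i₀) :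
    PhiS α ∈ Vset i₀ k := by
  have h0 : (α 0 - 1) + 2 = dSeq silvesterH α 0 := by
    have := hα 0; simp only [dSeq]; omega
  refine Set.mem_iUnion.2 ⟨α 0 - 1, ?_⟩
  rw [Set.mem_preimage, h0]
  have heq : -(1 / (dSeq silvesterH α 0 : ℝ)) + PhiS α = tailSum α (0 + 1) := by
    rw [PhiS_eq_tailSum, tail_eq hα 0]; ring
  rw [heq]
  exact tail_mem_Eset hα i₀ k 0 (by simpa using hk)

end

/-- If the difference-Silvester symbols are independent with laws `p_k`
(probability measures on the positive integers, with joint law `P`) and there is a positive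
integer `i₀` with `Σ_{k≥1} p_k({i₀}) = +∞`, then the distribution `μ_ξ = (Φ_S)_*P` is singular
with respect to Lebesgue measure. -/
theorem silvester_singular_of_divergent_sum
    (p : ℕ → Measure ℕ) [∀ k, IsProbabilityMeasure (p k)]
    (hp0 : ∀ k, p k {0} = 0)
    (P : Measure (ℕ → ℕ)) [IsProbabilityMeasure P]
    (hlaw : ∀ k : ℕ, P.map (fun α => α k) = p k)
    (hindep : ProbabilityTheory.iIndepFun
      (fun k (α : ℕ → ℕ) => α k) P)
    (i₀ : ℕ) (hi₀ : 1 ≤ i₀) (hdiv : ∑' k : ℕ, p k {i₀} = ⊤) :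
    (P.map PhiS).MutuallySingular volume := by
  classical
  set E : ℕ → Set (ℕ → ℕ) := fun k => (fun α : ℕ → ℕ => α k) ⁻¹' {i₀} with hE
  have hmeasE : ∀ k, MeasurableSet (E k) := fun k =>
    (measurable_pi_apply k) (measurableSet_singleton i₀)
  have hPE : ∀ k, P (E k) = p k {i₀} := fun k => by
    rw [hE, ← Measure.map_apply (measurable_pi_apply k) (measurableSet_singleton i₀), hlaw k]
  have hindepSet : ProbabilityTheory.iIndepSet E P := by
    rw [ProbabilityTheory.iIndepSet_iff_meas_biInter hmeasE]
    intro S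
    exact (ProbabilityTheory.iIndepFun_iff_measure_inter_preimage_eq_mul.1 hindep) S
      (sets := fun _ => ({i₀} : Set ℕ)) (fun i _ => measurableSet_singleton i₀)
  have hsum : (∑' k, P (E k)) = ⊤ := by simp_rw [hPE]; exact hdiv
  have hBC := ProbabilityTheory.measure_limsup_eq_one hmeasE hindepSet hsum
  have hL : Filter.limsup E Filter.atTop = ⋂ N : ℕ, ⋃ k : ℕ, ⋃ _ : N ≤ k, E k := by
    rw [Filter.limsup_eq_iInf_iSup_of_nat]; rfl
  have hzero : ∀ k, P {α : ℕ → ℕ | α k = 0} = 0 := by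
    intro k
    have h1 : {α : ℕ → ℕ | α k = 0} = (fun α : ℕ → ℕ => α k) ⁻¹' {0} := rfl
    rw [h1, ← Measure.map_apply (measurable_pi_apply k) (measurableSet_singleton 0), hlaw k]
    exact hp0 k
  set G : Set (ℕ → ℕ) := {α | ∀ k, 1 ≤ α k} ∩ Filter.limsup E Filter.atTop with hG
  have hGc : P Gᶜ = 0 := by
    rw [hG, Set.compl_inter]
    refine measure_union_null ?_ ?_
    · refine measure_mono_null ?_ (measure_iUnion_null fun k => hzero k)
      intro α hα
      simp only [Set.mem_compl_iff, Set.mem_setOf_eq, not_forall] at hα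
      obtain ⟨k, hk⟩ := hα
      exact Set.mem_iUnion.2 ⟨k, by simp only [Set.mem_setOf_eq]; omega⟩
    · have hml : MeasurableSet (Filter.limsup E Filter.atTop) := by
        rw [hL]
        exact MeasurableSet.iInter fun N => MeasurableSet.iUnion fun k =>
          MeasurableSet.iUnion fun _ => hmeasE k
      rw [measure_compl hml (measure_ne_top P _), hBC, measure_univ]
      simp
  have hincl : G ⊆ PhiS ⁻¹' Sset i₀ := by
    intro α hαG
    obtain ⟨hpos, hlim⟩ := hαG
    have hfreq : ∀ N : ℕ, ∃ k, N ≤ k ∧ α (k + 1) = i₀ := by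
      intro N
      rw [hL] at hlim
      have h1 := Set.mem_iInter.1 hlim (N + 1)
      obtain ⟨k, hk⟩ := Set.mem_iUnion.1 h1
      obtain ⟨hNk, hxk⟩ := Set.mem_iUnion.1 hk
      refine ⟨k - 1, by omega, ?_⟩
      rw [show k - 1 + 1 = k from by omega]
      exact hxk
    refine Set.mem_preimage.2 (Set.mem_iInter.2 fun N => ?_)
    obtain ⟨k, hNk, hk⟩ := hfreq N
    exact Set.mem_iUnion.2 ⟨k, Set.mem_iUnion.2 ⟨hNk, PhiS_mem_Vset hpos hk⟩⟩
  refine ⟨(Sset i₀)ᶜ, (measurableSet_Sset i₀).compl, ?_, ?_⟩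
  · by_cases hm : AEMeasurable PhiS P
    · rw [Measure.map_apply_of_aemeasurable hm (measurableSet_Sset i₀).compl]
      refine measure_mono_null ?_ hGc
      intro α hα
      simp only [Set.mem_preimage, Set.mem_compl_iff] at hα ⊢
      exact fun hαG => hα (hincl hαG)
    · rw [Measure.map_of_not_aemeasurable hm]; rfl
  · rw [compl_compl]; exact volume_Sset i₀ hi₀

end ROE
end

section
/- Consider the restricted Oppenheim expansion with a_n(j) = j and b_n(j) = 1 for all n (so h_n(j) = j²(j−1)): x_1 = x, d_n = ⌊1/x_n⌋ + 1, x_{n+1} = (1/d_n)·(x_n − 1/d_n), with difference digits α_1(x) = d_1(x) − 1 and α_{k+1}(x) = d_{k+1}(x) − d_k(x)²(d_k(x) − 1). Then for λ-almost every x ∈ (0,1), every positive integer i occurs only finitely many times among the digits α_k(x). -/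
open MeasureTheory Set
open scoped ENNReal

namespace ROE

/-- The ROE with `a_n(j) = j` and `b_n(j) = 1`, for which `h_n(j) = j²(j-1)` and the algorithm
reads `x_{n+1} = (1/d_n)·(x_n - 1/d_n)`. -/
def sqA : ℕ → ℕ → ℕ := fun _ j => j

def sqB : ℕ → ℕ → ℕ := fun _ _ => 1

def sqH : ℕ → ℕ → ℕ := fun _ j => j ^ 2 * (j - 1)

def hh (j : ℕ) : ℕ := j ^ 2 * (j - 1)

lemma D_zero (x : ℝ) : D sqA sqB x 0 = (⌊1/x⌋).toNat + 1 := rfl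

lemma floor_pos_of_mem_s13 {x : ℝ} (hx : x ∈ Set.Ioo (0:ℝ) 1) : (1:ℤ) ≤ ⌊1/x⌋ := by
  have h1 : (1:ℝ) ≤ 1/x := by
    rw [le_div_iff₀ hx.1]; linarith [hx.2]
  exact Int.le_floor.2 (by exact_mod_cast h1)

lemma two_le_D_s13 {x : ℝ} (hx : x ∈ Set.Ioo (0:ℝ) 1) : 2 ≤ D sqA sqB x 0 := by
  have := floor_pos_of_mem_s13 hx
  rw [D_zero]; omega

lemma D_mem_Ioc {x : ℝ} (hx : x ∈ Set.Ioo (0:ℝ) 1) :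
    x ∈ Set.Ioc (((D sqA sqB x 0 : ℕ):ℝ))⁻¹ (((D sqA sqB x 0 - 1 : ℕ):ℝ))⁻¹ := by
  have hx0 := hx.1
  have hn1 : (1:ℤ) ≤ ⌊1/x⌋ := floor_pos_of_mem_s13 hx
  have hfl : ((⌊1/x⌋:ℤ):ℝ) ≤ 1/x := Int.floor_le _
  have hfu : 1/x < ((⌊1/x⌋:ℤ):ℝ) + 1 := Int.lt_floor_add_one _
  have hD : D sqA sqB x 0 = ⌊1/x⌋.toNat + 1 := D_zero x
  have key : ((⌊1/x⌋.toNat : ℕ) : ℝ) = ((⌊1/x⌋ : ℤ) : ℝ) := by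
    exact_mod_cast Int.toNat_of_nonneg (by omega)
  have hc1 : ((D sqA sqB x 0 : ℕ):ℝ) = ((⌊1/x⌋:ℤ):ℝ) + 1 := by
    simp only [hD, Nat.cast_add, Nat.cast_one, key]
  have hc2 : ((D sqA sqB x 0 - 1 : ℕ):ℝ) = ((⌊1/x⌋:ℤ):ℝ) := by
    have h' : (D sqA sqB x 0 - 1 : ℕ) = ⌊1/x⌋.toNat := by rw [hD]; omega
    rw [h']; exact key
  have hnR : (1:ℝ) ≤ ((⌊1/x⌋:ℤ):ℝ) := by exact_mod_cast hn1
  constructor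
  · rw [hc1, inv_eq_one_div, div_lt_iff₀ (by linarith)]
    have h1x : 1 ≤ x * (1/x) := by field_simp; norm_num
    nlinarith
  · rw [hc2, inv_eq_one_div, le_div_iff₀ (by linarith)]
    have : ((⌊1/x⌋:ℤ):ℝ) * x ≤ (1/x) * x := by nlinarith
    calc x * ((⌊1/x⌋:ℤ):ℝ) = ((⌊1/x⌋:ℤ):ℝ) * x := by ring
    _ ≤ (1/x) * x := this
    _ = 1 := by field_simp
lemma X_succ (x : ℝ) (k : ℕ) : X sqA sqB x (k+1)
    = (1/(D sqA sqB x k : ℝ)) * (X sqA sqB x k - 1/(D sqA sqB x k : ℝ)) := by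
  rw [X]; simp [D, sqA, sqB]
lemma X_shift (x : ℝ) (m : ℕ) :
    X sqA sqB x (m+1) = X sqA sqB (X sqA sqB x 1) m := by
  induction m with
  | zero => rfl
  | succ m ih =>
      rw [X_succ x (m+1), X_succ (X sqA sqB x 1) m, ih]
      have hD : D sqA sqB x (m+1) = D sqA sqB (X sqA sqB x 1) m := by
        simp [D, ih]
      rw [hD]
lemma D_shift (x : ℝ) (m : ℕ) :
    D sqA sqB x (m+1) = D sqA sqB (X sqA sqB x 1) m := by
  unfold D; rw [X_shift]
noncomputable def gmap (j : ℕ) (x : ℝ) : ℝ := (1/(j:ℝ)) * (x - 1/(j:ℝ))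

lemma X_one (x : ℝ) : X sqA sqB x 1 = gmap (D sqA sqB x 0) x := by
  rw [X_succ]; rfl

lemma le_inv_hh {x : ℝ} (hx : x ∈ Set.Ioo (0:ℝ) 1) :
    X sqA sqB x 1 ≤ ((hh (D sqA sqB x 0) : ℕ):ℝ)⁻¹ := by
  set d := D sqA sqB x 0 with hd
  have h2 : 2 ≤ d := two_le_D_s13 hx
  have hmem := D_mem_Ioc hx
  have hdR : (2:ℝ) ≤ (d:ℝ) := by exact_mod_cast h2
  have hd1 : ((d - 1 : ℕ):ℝ) = (d:ℝ) - 1 := by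
    push_cast [Nat.cast_sub (by omega : 1 ≤ d)]; ring
  have hhh : ((hh d : ℕ):ℝ) = (d:ℝ)^2 * ((d:ℝ) - 1) := by
    unfold hh; push_cast [Nat.cast_sub (by omega : 1 ≤ d)]; ring
  rw [X_one, ← hd]
  unfold gmap
  have hub : x ≤ ((d:ℝ) - 1)⁻¹ := by rw [← hd1]; exact hmem.2
  have hpos : (0:ℝ) < (d:ℝ) - 1 := by linarith
  rw [hhh]
  have key : (1/(d:ℝ)) * (x - 1/(d:ℝ)) ≤ (1/(d:ℝ)) * (((d:ℝ)-1)⁻¹ - 1/(d:ℝ)) := by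
    apply mul_le_mul_of_nonneg_left _ (by positivity)
    linarith
  calc (1/(d:ℝ)) * (x - 1/(d:ℝ)) ≤ (1/(d:ℝ)) * (((d:ℝ)-1)⁻¹ - 1/(d:ℝ)) := key
  _ = ((d:ℝ)^2 * ((d:ℝ)-1))⁻¹ := by field_simp; ring

lemma D_one_gt {x : ℝ} (hx : x ∈ Set.Ioo (0:ℝ) 1) (hy : X sqA sqB x 1 ∈ Set.Ioo (0:ℝ) 1) :
    hh (D sqA sqB x 0) < D sqA sqB x 1 := by
  have hle := le_inv_hh hx
  set y := X sqA sqB x 1 with hy'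
  set H := hh (D sqA sqB x 0) with hH
  have hHpos : 0 < H := by
    have h2 := two_le_D_s13 hx
    simp only [hH, hh]
    exact Nat.mul_pos (pow_pos (by omega) 2) (by omega)
  have hHR : (0:ℝ) < (H:ℕ) := by exact_mod_cast hHpos
  have h1 : ((H:ℕ):ℝ) ≤ 1/y := by
    rw [le_div_iff₀ hy.1]
    calc ((H:ℕ):ℝ) * y ≤ ((H:ℕ):ℝ) * ((H:ℕ):ℝ)⁻¹ := by
          apply mul_le_mul_of_nonneg_left hle (le_of_lt hHR)
    _ = 1 := by field_simp
  have hfloor : (H:ℤ) ≤ ⌊1/y⌋ := Int.le_floor.2 (by exact_mod_cast h1)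
  show H < D sqA sqB y 0
  rw [D_zero]
  omega

lemma D_gt_of_inf {x : ℝ} (hx : ∀ m, X sqA sqB x m ∈ Set.Ioo (0:ℝ) 1) (k : ℕ) :
    hh (D sqA sqB x k) < D sqA sqB x (k+1) := by
  induction k generalizing x with
  | zero => exact D_one_gt (hx 0) (hx 1)
  | succ k ih =>
      rw [D_shift, D_shift]
      exact ih (fun m => by rw [← X_shift]; exact hx (m+1))

lemma volume_gmap_preimage {j : ℕ} (hj : 2 ≤ j) (s : Set ℝ) :
    volume (gmap j ⁻¹' s) = ENNReal.ofReal (j:ℝ) * volume s := by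
  have hj0 : ((j:ℝ)) ≠ 0 := by positivity
  have hdec : gmap j ⁻¹' s
      = (fun x : ℝ => x + (-(1/(j:ℝ)))) ⁻¹' ((fun x : ℝ => (1/(j:ℝ)) * x) ⁻¹' s) := by
    ext x; simp [gmap, sub_eq_add_neg, mul_comm]
  rw [hdec]
  rw [measure_preimage_add_right]
  have := Real.volume_preimage_mul_left (a := 1/(j:ℝ)) (by positivity) s
  simp only [this]
  congr 1
  rw [abs_of_pos]
  · field_simp
  · positivity
lemma real_tel (c : ℕ) (hc : 1 ≤ c) (N : ℕ) :
    ∑ j ∈ Finset.range (N+1), (if c < j ∧ 2 ≤ j then (((j*(j-1) : ℕ)):ℝ)⁻¹ else 0)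
      ≤ ((c:ℕ):ℝ)⁻¹ - (((max c N : ℕ)):ℝ)⁻¹ := by
  induction N with
  | zero =>
      simp [Finset.sum_range_one]
  | succ N ih =>
      rw [Finset.sum_range_succ]
      by_cases hcN : c < N + 1
      · have hN1 : 1 ≤ N := by omega
        have hmaxN : max c N = N := by omega
        have hmaxN1 : max c (N+1) = N+1 := by omega
        have h2 : 2 ≤ N + 1 := by omega
        have hif : (if c < N+1 ∧ 2 ≤ N+1 then ((((N+1)*((N+1)-1) : ℕ)):ℝ)⁻¹ else 0)
            = ((((N+1)*N : ℕ)):ℝ)⁻¹ := by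
          rw [if_pos ⟨hcN, h2⟩]; norm_num
        rw [hif, hmaxN1]
        have hNpos : (0:ℝ) < (N:ℝ) := by exact_mod_cast hN1
        have hsplit : ((((N+1)*N : ℕ)):ℝ)⁻¹ = ((N:ℕ):ℝ)⁻¹ - (((N+1:ℕ)):ℝ)⁻¹ := by
          push_cast; rw [eq_sub_iff_add_eq]; field_simp; ring
        rw [hsplit]
        have := ih
        rw [hmaxN] at this
        push_cast at this ⊢
        linarith
      · have hmaxN : max c N = c := by omega
        have hmaxN1 : max c (N+1) = c := by omega
        rw [if_neg (by omega), hmaxN1]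
        rw [hmaxN] at ih
        linarith
lemma real_tel' (c : ℕ) (hc : 1 ≤ c) (N : ℕ) :
    ∑ j ∈ Finset.range N, (if c < j ∧ 2 ≤ j then (((j*(j-1) : ℕ)):ℝ)⁻¹ else 0)
      ≤ ((c:ℕ):ℝ)⁻¹ := by
  cases N with
  | zero => simp
  | succ N =>
      refine le_trans (real_tel c hc N) ?_
      have : (0:ℝ) ≤ (((max c N : ℕ)):ℝ)⁻¹ := by positivity
      linarith
lemma enn_core (c : ℕ) (hc : 1 ≤ c) :
    ∑' j : ℕ, (if c < j ∧ 2 ≤ j then (((j*(j-1) : ℕ)):ℝ≥0∞)⁻¹ else 0)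
      ≤ ((c:ℕ):ℝ≥0∞)⁻¹ := by
  have hterm : ∀ j : ℕ, (if c < j ∧ 2 ≤ j then (((j*(j-1) : ℕ)):ℝ≥0∞)⁻¹ else 0)
      = ENNReal.ofReal (if c < j ∧ 2 ≤ j then (((j*(j-1) : ℕ)):ℝ)⁻¹ else 0) := by
    intro j
    split_ifs with h
    · have h1 : 1 ≤ j * (j - 1) := Nat.mul_pos (by omega) (by omega)
      have hpos : (0:ℝ) < ((j*(j-1) : ℕ):ℝ) := by exact_mod_cast h1
      rw [ENNReal.ofReal_inv_of_pos hpos, ENNReal.ofReal_natCast]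
    · simp
  simp only [hterm]
  rw [ENNReal.tsum_eq_iSup_sum]
  apply iSup_le
  intro s
  rcases s.eq_empty_or_nonempty with rfl | hs
  · simp
  have hsub : s ⊆ Finset.range (s.max' hs + 1) := by
    intro a ha
    simp only [Finset.mem_range]
    exact Nat.lt_succ_of_le (Finset.le_max' s a ha)
  calc ∑ j ∈ s, ENNReal.ofReal (if c < j ∧ 2 ≤ j then (((j*(j-1) : ℕ)):ℝ)⁻¹ else 0)
      ≤ ∑ j ∈ Finset.range (s.max' hs + 1),
          ENNReal.ofReal (if c < j ∧ 2 ≤ j then (((j*(j-1) : ℕ)):ℝ)⁻¹ else 0) :=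
        Finset.sum_le_sum_of_subset hsub
  _ = ENNReal.ofReal (∑ j ∈ Finset.range (s.max' hs + 1),
        (if c < j ∧ 2 ≤ j then (((j*(j-1) : ℕ)):ℝ)⁻¹ else 0)) := by
        rw [ENNReal.ofReal_sum_of_nonneg]
        intro j _
        split_ifs <;> positivity
  _ ≤ ENNReal.ofReal (((c:ℕ):ℝ)⁻¹) := ENNReal.ofReal_le_ofReal (real_tel' c hc _)
  _ = ((c:ℕ):ℝ≥0∞)⁻¹ := by
        rw [ENNReal.ofReal_inv_of_pos (by exact_mod_cast hc), ENNReal.ofReal_natCast]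

lemma tsum_tel (c R : ℕ) (hc : 1 ≤ c) (hR : 0 < R) (g : ℕ → ℝ≥0∞)
    (hg : ∀ j, c < j → 2 ≤ j → g j ≤ (((j*(j-1)*R : ℕ)):ℝ≥0∞)⁻¹) :
    ∑' j : ℕ, (if c < j ∧ 2 ≤ j then g j else 0) ≤ (((c*R : ℕ)):ℝ≥0∞)⁻¹ := by
  have hsplit : ∀ n m : ℕ, (((n*m : ℕ)):ℝ≥0∞)⁻¹ = ((n:ℕ):ℝ≥0∞)⁻¹ * ((m:ℕ):ℝ≥0∞)⁻¹ := by
    intro n m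
    push_cast
    rw [ENNReal.mul_inv] <;> simp
  calc ∑' j : ℕ, (if c < j ∧ 2 ≤ j then g j else 0)
      ≤ ∑' j : ℕ, (if c < j ∧ 2 ≤ j then (((j*(j-1) : ℕ)):ℝ≥0∞)⁻¹ else 0) * ((R:ℕ):ℝ≥0∞)⁻¹ := by
        apply ENNReal.tsum_le_tsum
        intro j
        split_ifs with h
        · rw [← hsplit]; exact hg j h.1 h.2
        · simp
  _ = (∑' j : ℕ, (if c < j ∧ 2 ≤ j then (((j*(j-1) : ℕ)):ℝ≥0∞)⁻¹ else 0)) * ((R:ℕ):ℝ≥0∞)⁻¹ :=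
        ENNReal.tsum_mul_right
  _ ≤ ((c:ℕ):ℝ≥0∞)⁻¹ * ((R:ℕ):ℝ≥0∞)⁻¹ := by
        exact mul_le_mul_left (enn_core c hc) _
  _ = (((c*R : ℕ)):ℝ≥0∞)⁻¹ := (hsplit c R).symm
lemma enn_ratio {j K M : ℕ} (hM : 0 < M) (hK : 0 < K) (h : K * j ≤ M) :
    (j:ℝ≥0∞) * ((M:ℕ):ℝ≥0∞)⁻¹ ≤ ((K:ℕ):ℝ≥0∞)⁻¹ := by
  have hMR : (0:ℝ) < (M:ℝ) := by exact_mod_cast hM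
  have hKR : (0:ℝ) < (K:ℝ) := by exact_mod_cast hK
  have e1 : (j:ℝ≥0∞) = ENNReal.ofReal (j:ℝ) := (ENNReal.ofReal_natCast _).symm
  have e2 : ((M:ℕ):ℝ≥0∞)⁻¹ = ENNReal.ofReal ((M:ℝ)⁻¹) := by
    rw [ENNReal.ofReal_inv_of_pos hMR, ENNReal.ofReal_natCast]
  have e3 : ((K:ℕ):ℝ≥0∞)⁻¹ = ENNReal.ofReal ((K:ℝ)⁻¹) := by
    rw [ENNReal.ofReal_inv_of_pos hKR, ENNReal.ofReal_natCast]
  rw [e1, e2, e3, ← ENNReal.ofReal_mul (by positivity)]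
  apply ENNReal.ofReal_le_ofReal
  rw [mul_comm, ← div_eq_inv_mul, inv_eq_one_div, div_le_div_iff₀ hMR hKR]
  rw [one_mul, mul_comm]
  exact_mod_cast h

lemma nat_hh_pos {j : ℕ} (hj : 2 ≤ j) : 0 < hh j := by
  unfold hh; exact Nat.mul_pos (pow_pos (by omega) 2) (by omega)

lemma nat_key {c j : ℕ} (hc : 1 ≤ c) (hcj : c < j) (hj : 2 ≤ j) : (c+1)^2 ≤ hh j + 1 := by
  unfold hh
  calc (c+1)^2 ≤ j^2 * 1 := by nlinarith
  _ ≤ j^2 * (j-1) := Nat.mul_le_mul_left _ (by omega)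
  _ ≤ j^2 * (j-1) + 1 := by omega

lemma nat_base {c j i : ℕ} (hc : 1 ≤ c) (hcj : c < j) (hj : 2 ≤ j) (hi : 1 ≤ i) :
    (j*(j-1)*((c+1)^2)) * j ≤ (hh j + i) * (hh j + i - 1) := by
  have hk := nat_key hc hcj hj
  have h1 : j*(j-1)*((c+1)^2) * j = (c+1)^2 * hh j := by unfold hh; ring_nf
  rw [h1]
  calc (c+1)^2 * hh j ≤ (hh j + 1) * hh j := Nat.mul_le_mul_right _ hk
  _ ≤ (hh j + i) * (hh j + i - 1) := by
      apply Nat.mul_le_mul <;> omega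

lemma nat_step {c j : ℕ} (hc : 1 ≤ c) (hcj : c < j) (hj : 2 ≤ j) (E : ℕ) :
    (j*(j-1)*((c+1)^(2*E))) * j ≤ hh j * (hh j + 1)^E := by
  have hk := nat_key hc hcj hj
  have h1 : j*(j-1)*((c+1)^(2*E)) * j = hh j * ((c+1)^2)^E := by
    unfold hh; rw [← pow_mul]; ring_nf
  rw [h1]
  exact Nat.mul_le_mul_left _ (Nat.pow_le_pow_left hk E)
noncomputable def U (i : ℕ) : ℕ → ℕ → Set ℝ
  | 0, c => ⋃ j : ℕ, if c < j ∧ 2 ≤ j then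
      gmap j ⁻¹' Set.Ioc (((hh j + i : ℕ):ℝ))⁻¹ (((hh j + i - 1 : ℕ):ℝ))⁻¹ else ∅
  | k+1, c => ⋃ j : ℕ, if c < j ∧ 2 ≤ j then gmap j ⁻¹' U i k (hh j) else ∅

def T (i k c : ℕ) : Set ℝ :=
  {x | (∀ m, m ≤ k+1 → X sqA sqB x m ∈ Set.Ioo (0:ℝ) 1) ∧ c < D sqA sqB x 0
    ∧ D sqA sqB x (k+1) = hh (D sqA sqB x k) + i}

lemma T_subset_U (i : ℕ) : ∀ k c, T i k c ⊆ U i k c := by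
  intro k
  induction k with
  | zero =>
      intro c x hx
      obtain ⟨hX, hc, hD⟩ := hx
      have h0 : x ∈ Set.Ioo (0:ℝ) 1 := hX 0 (by omega)
      have h1 : X sqA sqB x 1 ∈ Set.Ioo (0:ℝ) 1 := hX 1 le_rfl
      rw [U]
      have hmem := D_mem_Ioc h1
      have hD10 : D sqA sqB x 1 = D sqA sqB (X sqA sqB x 1) 0 := D_shift x 0
      rw [← hD10, hD] at hmem
      apply Set.mem_iUnion.2 ⟨D sqA sqB x 0, ?_⟩
      rw [if_pos ⟨hc, two_le_D_s13 h0⟩, Set.mem_preimage, ← X_one]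
      exact hmem
  | succ k ih =>
      intro c x hx
      obtain ⟨hX, hc, hD⟩ := hx
      have h0 : x ∈ Set.Ioo (0:ℝ) 1 := hX 0 (by omega)
      have h1 : X sqA sqB x 1 ∈ Set.Ioo (0:ℝ) 1 := hX 1 (by omega)
      rw [U]
      have hy : X sqA sqB x 1 ∈ T i k (hh (D sqA sqB x 0)) := by
        refine ⟨?_, ?_, ?_⟩
        · intro m hm
          rw [← X_shift]
          exact hX (m+1) (by omega)
        · rw [← D_shift]
          exact D_one_gt h0 h1
        · rw [← D_shift, ← D_shift]
          exact hD
      apply Set.mem_iUnion.2 ⟨D sqA sqB x 0, ?_⟩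
      rw [if_pos ⟨hc, two_le_D_s13 h0⟩, Set.mem_preimage, ← X_one]
      exact ih _ hy

lemma volume_U (i : ℕ) (hi : 1 ≤ i) : ∀ k c, 1 ≤ c →
    volume (U i k c) ≤ (((c * (c+1)^(2^(k+1)) : ℕ)):ℝ≥0∞)⁻¹ := by
  intro k
  induction k with
  | zero =>
      intro c hc
      rw [U]
      refine le_trans (measure_iUnion_le _) ?_
      have hexp : (2:ℕ)^(0+1) = 2 := by norm_num
      rw [hexp]
      refine le_trans (le_of_eq (tsum_congr (fun j => ?_)))
        (tsum_tel c ((c+1)^2) hc (by positivity)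
          (fun j => volume (gmap j ⁻¹' Set.Ioc (((hh j + i : ℕ):ℝ))⁻¹ (((hh j + i - 1 : ℕ):ℝ))⁻¹))
          ?_)
      · split_ifs <;> simp
      intro j hcj h2j
      set J := hh j + i with hJ
      have hJ2 : 2 ≤ J := by
        have := nat_hh_pos h2j; omega
      have hJR : (0:ℝ) < ((J:ℕ):ℝ) := by
        have : 0 < J := by omega
        exact_mod_cast this
      have hJ1R : (0:ℝ) < ((J-1:ℕ):ℝ) := by
        have : 0 < J - 1 := by omega
        exact_mod_cast this
      have hIoc : volume (Set.Ioc (((J:ℕ):ℝ))⁻¹ (((J-1:ℕ):ℝ))⁻¹)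
          = (((J*(J-1) : ℕ)):ℝ≥0∞)⁻¹ := by
        rw [Real.volume_Ioc]
        have hid : (((J-1:ℕ):ℝ))⁻¹ - (((J:ℕ):ℝ))⁻¹ = ((((J*(J-1):ℕ)):ℝ))⁻¹ := by
          have h1 : ((J-1:ℕ):ℝ) = (J:ℝ) - 1 := by
            push_cast [Nat.cast_sub (by omega : 1 ≤ J)]; ring
          have h2 : (((J*(J-1):ℕ)):ℝ) = (J:ℝ) * ((J:ℝ) - 1) := by
            push_cast [Nat.cast_sub (by omega : 1 ≤ J)]; ring
          rw [h1, h2, inv_sub_inv (by linarith) (by linarith),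
            show (J:ℝ) - ((J:ℝ)-1) = 1 by ring, one_div, mul_comm]
        have hJJpos : (0:ℝ) < (((J*(J-1):ℕ)):ℝ) := by
          have : 0 < J * (J-1) := Nat.mul_pos (by omega) (by omega)
          exact_mod_cast this
        rw [hid, ENNReal.ofReal_inv_of_pos hJJpos, ENNReal.ofReal_natCast]
      rw [volume_gmap_preimage h2j, hIoc, ENNReal.ofReal_natCast]
      apply enn_ratio
      · exact Nat.mul_pos (by omega) (by omega)
      · exact Nat.mul_pos (Nat.mul_pos (by omega) (by omega)) (by positivity)
      · exact nat_base hc hcj h2j hi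
  | succ k ih =>
      intro c hc
      rw [U]
      refine le_trans (measure_iUnion_le _) ?_
      refine le_trans (le_of_eq (tsum_congr (fun j => ?_)))
        (tsum_tel c ((c+1)^(2^(k+1+1))) hc (by positivity)
          (fun j => volume (gmap j ⁻¹' U i k (hh j))) ?_)
      · split_ifs <;> simp
      intro j hcj h2j
      rw [volume_gmap_preimage h2j, ENNReal.ofReal_natCast]
      have hhj1 : 1 ≤ hh j := nat_hh_pos h2j
      have hIH := ih (hh j) hhj1
      calc (j:ℝ≥0∞) * volume (U i k (hh j))
          ≤ (j:ℝ≥0∞) * ((((hh j * (hh j + 1)^(2^(k+1)) : ℕ))):ℝ≥0∞)⁻¹ :=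
            mul_le_mul_right hIH _
      _ ≤ (((j*(j-1)*((c+1)^(2^(k+1+1))) : ℕ)):ℝ≥0∞)⁻¹ := by
            apply enn_ratio
            · exact Nat.mul_pos (by omega) (by positivity)
            · exact Nat.mul_pos (Nat.mul_pos (by omega) (by omega)) (by positivity)
            · have : (2:ℕ)^(k+1+1) = 2 * 2^(k+1) := by ring
              rw [this]
              exact nat_step hc hcj h2j (2^(k+1))

lemma volume_U_one (i : ℕ) (hi : 1 ≤ i) (k : ℕ) :
    volume (U i k 1) ≤ ((2:ℝ≥0∞))⁻¹^(k+1) := by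
  refine le_trans (volume_U i hi k 1 le_rfl) ?_
  have h1 : ((1 * (1+1)^(2^(k+1)) : ℕ) : ℝ≥0∞) = (2:ℝ≥0∞)^(2^(k+1)) := by push_cast; ring
  rw [h1, ← ENNReal.inv_pow]
  apply ENNReal.inv_le_inv.2
  apply pow_le_pow_right₀ one_le_two
  have := Nat.lt_two_pow_self (n := k+1)
  omega

/-- For the restricted Oppenheim expansion with `a_n(j) = j`, `b_n(j) = 1`
(difference digits `α₁ = d₁ - 1`, `α_{k+1} = d_{k+1} - d_k²(d_k - 1)`), for `λ`-almost every
`x ∈ (0,1)`, every positive integer `i` occurs only finitely many times among the digits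
`α_k(x)`. -/
theorem sq_ae_finitely_many_occurrences :
    ∀ᵐ x ∂(volume.restrict (Set.Ioo (0 : ℝ) 1)),
      InfiniteROE sqA sqB x →
        ∀ i : ℕ, 1 ≤ i → {k : ℕ | alpha sqA sqB sqH x k = i}.Finite := by
  have main : ∀ i : ℕ, ∀ᵐ x ∂(volume.restrict (Set.Ioo (0 : ℝ) 1)),
      1 ≤ i → InfiniteROE sqA sqB x → {k : ℕ | alpha sqA sqB sqH x k = i}.Finite := by
    intro i
    by_cases hi : 1 ≤ i
    swap
    · filter_upwards with x h; omega
    have hsum : (∑' k : ℕ, volume (U i k 1)) ≠ ∞ := by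
      apply ne_top_of_le_ne_top (b := ∑' k : ℕ, ((2:ℝ≥0∞)⁻¹)^k)
      · rw [ENNReal.tsum_geometric]
        simp [ENNReal.inv_ne_top]
      · apply ENNReal.tsum_le_tsum
        intro k
        refine le_trans (volume_U_one i hi k) ?_
        apply pow_le_pow_right_of_le_one' (ENNReal.inv_le_one.2 ENNReal.one_lt_two.le) (by omega)
    have hBC : ∀ᵐ x ∂(volume : Measure ℝ), ∀ᶠ k in Filter.atTop, x ∉ U i k 1 :=
      ae_eventually_notMem hsum
    have hBC' : ∀ᵐ x ∂(volume.restrict (Set.Ioo (0 : ℝ) 1)),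
        ∀ᶠ k in Filter.atTop, x ∉ U i k 1 :=
      hBC.filter_mono (MeasureTheory.ae_mono Measure.restrict_le_self)
    filter_upwards [hBC'] with x hx _ hinf
    obtain ⟨N, hN⟩ := Filter.eventually_atTop.1 hx
    apply Set.Finite.subset (Set.finite_Iio (N+2))
    intro k hk
    simp only [Set.mem_setOf_eq] at hk
    by_contra hk2
    simp only [Set.mem_Iio, not_lt] at hk2
    obtain ⟨m, rfl⟩ : ∃ m, k = m + 1 := ⟨k-1, by omega⟩
    have hm : N ≤ m := by omega
    apply hN m hm
    apply T_subset_U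
    have hinf' : ∀ m', X sqA sqB x m' ∈ Set.Ioo (0:ℝ) 1 := hinf
    have hx0 : x ∈ Set.Ioo (0:ℝ) 1 := hinf' 0
    refine ⟨fun m' _ => hinf' m', by have := two_le_D_s13 hx0; omega, ?_⟩
    have hgt := D_gt_of_inf hinf' m
    have halpha : alpha sqA sqB sqH x (m+1)
        = D sqA sqB x (m+1) - hh (D sqA sqB x m) := rfl
    rw [halpha] at hk
    omega
  have hall := (MeasureTheory.ae_all_iff).2 main
  filter_upwards [hall] with x hx hinf i hi
  exact hx i hi hinf
end ROE
end
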